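/- Let p be a prime, A a set, and let f: ℙ(ℚ³) → A be a map taking exactly three values, taking at most two values on every projective line, and such that on every projective line the restriction of f is induced via some ℤ_(p)-lattice in the underlying ℚ² from a flag map on the corresponding projective line over F_p. Suppose f is induced via ℤ_(p)-lattices B and B′ of ℚ³ from flag maps f̄: ℙ(B/pB) → A and f̄′: ℙ(B′/pB′) → A, each taking three pairwise distinct values, with associated flags q̄ ∈ l̄ ⊂ ℙ(B/pB) and q̄′ ∈ l̄′ ⊂ ℙ(B′/pB′) (i.e., f̄ is constant on ℙ(B/pB) ∖ l̄, constant on l̄ ∖ {q̄}, and takes a third value at q̄, and similarly for f̄′). If f̄(q̄) = f̄′(q̄′), then B′ = aB for some a ∈ ℚ^×, and f̄ = f̄′ under the identification of ℙ(B/pB) with ℙ(B′/pB′) induced by multiplication by a. -/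

import Mathlib

/- Common set-up for statements about projective spaces `ℙ(V)`: flag maps,
   `ℤ_(p)`-lattices and the associated reduction maps to `ℙ(B/pB)`
   (two nonzero vectors are identified by `ρ_B` iff suitable nonzero scalar
   multiples of them lie in `B ∖ pB` and are congruent modulo `pB`). -/

universe u v w

section PreludeB

variable {k : Type u} [Field k] {V : Type v} [AddCommGroup V] [Module k V] {A : Type w}

/-- The projective subspace `ℙ(W) ⊆ ℙ(V)` attached to a submodule `W ⊆ V`. -/
def psub (W : Submodule k V) : Set (Projectivization k V) :=
  {x | ∃ v : V, ∃ h : v ≠ 0, Projectivization.mk k v h = x ∧ v ∈ W}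

/-- The projective line of `ℙ(V)` through the classes of two (independent)
vectors `v`, `w`. -/
def lineP (v w : V) : Set (Projectivization k V) :=
  {x | ∃ a b : k, ∃ h : a • v + b • w ≠ 0, Projectivization.mk k (a • v + b • w) h = x}

/-- `f` is a flag map on the finite-dimensional projective subspace `ℙ(W)`:
there is a chain (flag) of subspaces of `W` such that `f` is constant on each
successive difference. -/
def ChainFlagOn (f : Projectivization k V → A) (W : Submodule k V) : Prop :=
  ∃ c : ℕ → Submodule k V, c 0 = ⊥ ∧ (∃ n, c n = W) ∧ (∀ i, c i ≤ c (i + 1)) ∧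
    (∀ i, c i ≤ W) ∧
    ∀ i, ∀ x ∈ psub (c (i + 1)) \ psub (c i), ∀ y ∈ psub (c (i + 1)) \ psub (c i), f x = f y

/-- A flag map on a projective space over `F_p` (possibly infinite-dimensional):
the restriction to every finite-dimensional projective subspace is a flag map. -/
def FpFlagMap (f : Projectivization k V → A) : Prop :=
  ∀ W : Submodule k V, FiniteDimensional k W → ChainFlagOn f W

end PreludeB

section PreludeBQ

variable {V : Type v} [AddCommGroup V] [Module ℚ V] {A : Type w}

/-- The `ℤ_(p)`-span of a finite set of vectors (coefficients are rationals
with denominator coprime to `p`). -/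
def zpSpanV (p : ℕ) (s : Finset V) : Set V :=
  {z | ∃ f : V → ℚ, (∀ t, ¬ (p ∣ (f t).den)) ∧ z = ∑ t ∈ s, f t • t}

/-- `p·B`. -/
def pSMul (p : ℕ) (B : Set V) : Set V := {z | ∃ b ∈ B, z = (p : ℚ) • b}

/-- `B` is a `ℤ_(p)`-lattice in the `ℚ`-subspace `W`: a finitely generated
`ℤ_(p)`-submodule spanning `W` over `ℚ`. -/
def IsZpLatIn (p : ℕ) (W : Submodule ℚ V) (B : Set V) : Prop :=
  (∃ s : Finset V, B = zpSpanV p s) ∧ Submodule.span ℚ B = W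

/-- Two nonzero vectors have the same image under the reduction map
`ρ_B : ℙ(V) → ℙ(B/pB)`. -/
def ZpRelV (p : ℕ) (B : Set V) (x y : V) : Prop :=
  ∃ x' y' : V, (∃ a : ℚ, a ≠ 0 ∧ x' = a • x) ∧ (∃ b : ℚ, b ≠ 0 ∧ y' = b • y) ∧
    x' ∈ B ∧ x' ∉ pSMul p B ∧ y' ∈ B ∧ y' ∉ pSMul p B ∧ x' - y' ∈ pSMul p B

/-- Equivalence of lattices: `B' = a·B` for some `a ∈ ℚ^×`. -/
def LatEq (B B' : Set V) : Prop := ∃ a : ℚ, a ≠ 0 ∧ B' = (fun t => a • t) '' B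

/-- `f`, restricted to `ℙ(W)`, is induced via the lattice `B` (i.e. it factors
through the reduction map `ρ_B`); such lattices are called `f`-compatible. -/
def InducedOn (f : Projectivization ℚ V → A) (W : Submodule ℚ V) (p : ℕ) (B : Set V) : Prop :=
  ∀ x y : V, ∀ (hx : x ≠ 0) (hy : y ≠ 0), x ∈ W → y ∈ W → ZpRelV p B x y →
    f (Projectivization.mk ℚ x hx) = f (Projectivization.mk ℚ y hy)

/-- Preimage in `V` of the line of `ℙ(B/pB)` through the residue classes of
`q` and `w`. -/
def resLineV (p : ℕ) (B : Set V) (q w : V) : Set V :=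
  {z | ∃ a b : ℚ, ¬ (p ∣ a.den) ∧ ¬ (p ∣ b.den) ∧ ∃ y ∈ pSMul p B, z = a • q + b • w + y}

/-- `f` is induced via `B` from a flag map on the residue projective *line*
`ℙ(B/pB)`, i.e. from a map constant off one point (the class of `q`). -/
def ResFlagLine (f : Projectivization ℚ V → A) (p : ℕ) (B : Set V) : Prop :=
  ∃ q : V, q ∈ B \ pSMul p B ∧
    ∀ x y : V, ∀ (hx : x ≠ 0) (hy : y ≠ 0), ¬ ZpRelV p B x q → ¬ ZpRelV p B y q →
      f (Projectivization.mk ℚ x hx) = f (Projectivization.mk ℚ y hy)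

/-- `f` is induced via `B` from a flag map on the residue projective *plane*
`ℙ(B/pB)`: for a flag (point `q̄`) ∈ (line `l̄` through `q̄` and `w̄`), the map
is constant off `l̄` and constant on `l̄ ∖ {q̄}`. -/
def ResFlagPlane (f : Projectivization ℚ V → A) (p : ℕ) (B : Set V) : Prop :=
  ∃ q w : V, q ∈ B \ pSMul p B ∧ w ∈ B \ pSMul p B ∧ ¬ ZpRelV p B q w ∧
    (∀ x y : V, ∀ (hx : x ≠ 0) (hy : y ≠ 0),
      (∃ a : ℚ, a ≠ 0 ∧ a • x ∈ (B \ pSMul p B) ∧ a • x ∉ resLineV p B q w) →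
      (∃ b : ℚ, b ≠ 0 ∧ b • y ∈ (B \ pSMul p B) ∧ b • y ∉ resLineV p B q w) →
      f (Projectivization.mk ℚ x hx) = f (Projectivization.mk ℚ y hy)) ∧
    (∀ x y : V, ∀ (hx : x ≠ 0) (hy : y ≠ 0),
      (∃ a : ℚ, a ≠ 0 ∧ a • x ∈ resLineV p B q w \ pSMul p B) → ¬ ZpRelV p B x q →
      (∃ b : ℚ, b ≠ 0 ∧ b • y ∈ resLineV p B q w \ pSMul p B) → ¬ ZpRelV p B y q →
      f (Projectivization.mk ℚ x hx) = f (Projectivization.mk ℚ y hy))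

/-- `f` is induced via `B` from a *flag map* `f̄ : ℙ(B/pB) → A` (general
dimension): there is a chain of sublattices from `pB` to `B` (i.e. a flag of
subspaces of `B/pB`) with `f` constant on each successive difference. -/
def ResChainFlagOn (f : Projectivization ℚ V → A) (p : ℕ) (B : Set V) : Prop :=
  ∃ c : ℕ → Set V, c 0 = pSMul p B ∧ (∃ n, c n = B) ∧ (∀ i, c i ⊆ c (i + 1)) ∧
    (∀ i, (∀ x ∈ c i, ∀ y ∈ c i, x + y ∈ c i) ∧
      (∀ q : ℚ, ¬ (p ∣ q.den) → ∀ x ∈ c i, q • x ∈ c i)) ∧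
    ∀ i, ∀ x y : V, ∀ (hx : x ≠ 0) (hy : y ≠ 0),
      (∃ a : ℚ, a ≠ 0 ∧ a • x ∈ c (i + 1) \ c i) →
      (∃ b : ℚ, b ≠ 0 ∧ b • y ∈ c (i + 1) \ c i) →
      f (Projectivization.mk ℚ x hx) = f (Projectivization.mk ℚ y hy)

/-- `f` is a flag map on the finite-dimensional projective subspace
`ℙ(W) ⊆ ℙ(V)` over `ℚ`: either a chain (flag) of subspaces as over any field,
or induced via a `ℤ_(p)`-lattice `B` in `W` from a flag map on `ℙ(B/pB)`. -/
def QFlagOn (f : Projectivization ℚ V → A) (W : Submodule ℚ V) : Prop :=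
  ChainFlagOn f W ∨
    ∃ p : ℕ, p.Prime ∧ ∃ B : Set V, IsZpLatIn p W B ∧ ResChainFlagOn f p B

/-- A flag map on `ℙ(V)` over `ℚ` (possibly infinite-dimensional): the
restriction to every finite-dimensional projective subspace is a flag map. -/
def QFlagMap (f : Projectivization ℚ V → A) : Prop :=
  ∀ W : Submodule ℚ V, FiniteDimensional ℚ W → QFlagOn f W

end PreludeBQ


set_option linter.unusedSectionVars false
set_option linter.unusedVariables false
set_option maxHeartbeats 1000000

namespace St11
variable {p : ℕ} [hp : Fact p.Prime]

/-- `a ∈ ℤ_(p)`. -/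
def R (p : ℕ) (a : ℚ) : Prop := ¬ (p ∣ a.den)

/-- `a` is a unit of `ℤ_(p)`. -/
def Un (p : ℕ) (a : ℚ) : Prop := a ≠ 0 ∧ padicValRat p a = 0

/-- `a ∈ p·ℤ_(p)`. -/
def DivP (p : ℕ) (a : ℚ) : Prop := ∃ u : ℚ, R p u ∧ a = (p : ℚ) * u

lemma R_zero : R p 0 := by simp [R, hp.out.one_lt.ne']
lemma R_one : R p 1 := by simp [R, hp.out.one_lt.ne']
lemma R_intCast (n : ℤ) : R p (n : ℚ) := by simp [R, hp.out.one_lt.ne']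
lemma R_natCast (n : ℕ) : R p (n : ℚ) := by simp [R, hp.out.one_lt.ne']
lemma R_p : R p (p : ℚ) := R_natCast p

lemma R_add {a b : ℚ} (ha : R p a) (hb : R p b) : R p (a + b) := by
  intro h
  rcases (hp.out.dvd_mul.mp (h.trans (Rat.add_den_dvd a b))) with h' | h'
  exacts [ha h', hb h']

lemma R_mul {a b : ℚ} (ha : R p a) (hb : R p b) : R p (a * b) := by
  intro h
  rcases (hp.out.dvd_mul.mp (h.trans (Rat.mul_den_dvd a b))) with h' | h'
  exacts [ha h', hb h']

lemma R_neg {a : ℚ} (ha : R p a) : R p (-a) := by simpa [R] using ha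

lemma R_sub {a b : ℚ} (ha : R p a) (hb : R p b) : R p (a - b) := by
  rw [sub_eq_add_neg]; exact R_add ha (R_neg hb)

lemma R_val {a : ℚ} (ha : a ≠ 0) : R p a ↔ 0 ≤ padicValRat p a := by
  constructor
  · intro h
    rw [padicValRat_def]
    have : padicValNat p a.den = 0 := padicValNat.eq_zero_of_not_dvd h
    rw [this]
    simp
  · intro h hdvd
    have hnum : ¬ ((p : ℤ) ∣ a.num) := by
      intro hd
      have := a.reduced
      have : (p : ℕ) ∣ a.num.natAbs := Int.natCast_dvd_natCast.mp (by
        simpa [Int.dvd_natAbs] using hd)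
      exact hp.out.one_lt.ne' (Nat.eq_one_of_dvd_coprimes a.reduced this hdvd)
    have h1 : padicValInt p a.num = 0 := padicValInt.eq_zero_of_not_dvd hnum
    have h2 : 1 ≤ padicValNat p a.den :=
      one_le_padicValNat_of_dvd a.den_nz hdvd
    rw [padicValRat_def, h1] at h
    omega



lemma pQ_ne : ((p : ℚ)) ≠ 0 := Nat.cast_ne_zero.mpr hp.out.pos.ne'
lemma val_p : padicValRat p (p : ℚ) = 1 := padicValRat.self hp.out.one_lt

lemma Un_def {a : ℚ} (h0 : a ≠ 0) (hv : padicValRat p a = 0) : Un p a := ⟨h0, hv⟩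

lemma R_of_Un {a : ℚ} (h : Un p a) : R p a := (R_val h.1).mpr (le_of_eq h.2.symm)

lemma val_inv (a : ℚ) : padicValRat p a⁻¹ = - padicValRat p a := padicValRat.inv a

lemma Un_inv {a : ℚ} (h : Un p a) : Un p a⁻¹ :=
  ⟨inv_ne_zero h.1, by rw [val_inv, h.2, neg_zero]⟩

lemma R_inv_of_Un {a : ℚ} (h : Un p a) : R p a⁻¹ := R_of_Un (Un_inv h)

lemma Un_mul {a b : ℚ} (ha : Un p a) (hb : Un p b) : Un p (a * b) :=
  ⟨mul_ne_zero ha.1 hb.1, by rw [padicValRat.mul ha.1 hb.1, ha.2, hb.2]; ring⟩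

lemma Un_one : Un p 1 := ⟨one_ne_zero, by simp [padicValRat.one]⟩

lemma Un_neg {a : ℚ} (h : Un p a) : Un p (-a) := by
  refine ⟨neg_ne_zero.mpr h.1, ?_⟩
  rw [padicValRat.neg, h.2]

lemma DivP_def' {a : ℚ} (h0 : a ≠ 0) (hv : 1 ≤ padicValRat p a) : DivP p a := by
  refine ⟨a / p, ?_, by have := pQ_ne (p := p); field_simp [mul_comm]⟩
  rw [R_val (div_ne_zero h0 pQ_ne)]
  rw [div_eq_mul_inv, padicValRat.mul h0 (inv_ne_zero pQ_ne), val_inv, val_p]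
  omega

lemma DivP_zero : DivP p 0 := ⟨0, R_zero, by ring⟩

lemma val_DivP {a : ℚ} (h : DivP p a) (h0 : a ≠ 0) : 1 ≤ padicValRat p a := by
  obtain ⟨u, hu, rfl⟩ := h
  have hu0 : u ≠ 0 := by rintro rfl; simp at h0
  rw [padicValRat.mul pQ_ne hu0, val_p]
  have := (R_val hu0).mp hu
  omega

lemma DivP_R {a : ℚ} (h : DivP p a) : R p a := by
  obtain ⟨u, hu, rfl⟩ := h
  exact R_mul (by simpa [R] using (by simp [R, hp.out.one_lt.ne'] : ¬ (p ∣ ((p:ℚ)).den))) hu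

lemma DivP_add {a b : ℚ} (ha : DivP p a) (hb : DivP p b) : DivP p (a + b) := by
  obtain ⟨u, hu, rfl⟩ := ha; obtain ⟨v, hv, rfl⟩ := hb
  exact ⟨u + v, R_add hu hv, by ring⟩

lemma DivP_neg {a : ℚ} (ha : DivP p a) : DivP p (-a) := by
  obtain ⟨u, hu, rfl⟩ := ha
  exact ⟨-u, R_neg hu, by ring⟩

lemma DivP_mul_R {a b : ℚ} (ha : DivP p a) (hb : R p b) : DivP p (a * b) := by
  obtain ⟨u, hu, rfl⟩ := ha
  exact ⟨u * b, R_mul hu hb, by ring⟩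

lemma DivP_smul_R {a b : ℚ} (hb : R p b) (ha : DivP p a)  : DivP p (b * a) := by
  rw [mul_comm]; exact DivP_mul_R ha hb

lemma R_cases {a : ℚ} (ha : R p a) : DivP p a ∨ Un p a := by
  rcases eq_or_ne a 0 with rfl | h0
  · exact Or.inl DivP_zero
  · have := (R_val h0).mp ha
    rcases eq_or_lt_of_le this with h | h
    · exact Or.inr ⟨h0, h.symm⟩
    · exact Or.inl (DivP_def' h0 h)

lemma Un_not_DivP {a : ℚ} (h : Un p a) : ¬ DivP p a := by
  intro hd
  have h1 := val_DivP hd h.1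
  rw [h.2] at h1
  omega

lemma Un_add_DivP {a d : ℚ} (ha : Un p a) (hd : DivP p d) : Un p (a + d) := by
  have hR : R p (a + d) := R_add (R_of_Un ha) (DivP_R hd)
  rcases R_cases hR with h | h
  · exfalso
    have : DivP p a := by
      have : a = (a + d) + (-d) := by ring
      rw [this]
      exact DivP_add h (DivP_neg hd)
    exact Un_not_DivP ha this
  · exact h


lemma val_p_zpow (m : ℤ) : padicValRat p ((p : ℚ) ^ m) = m := by
  rcases le_or_gt 0 m with h | h
  · lift m to ℕ using h
    rw [zpow_natCast, padicValRat.pow (p : ℚ), val_p, mul_one]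
  · have h' : 0 ≤ -m := by omega
    lift -m to ℕ using h' with n hn
    have : (p : ℚ) ^ m = ((p:ℚ) ^ n)⁻¹ := by
      rw [← zpow_natCast, ← zpow_neg, hn, neg_neg]
    rw [this, padicValRat.inv, padicValRat.pow (p : ℚ), val_p, mul_one]
    omega

lemma pz_ne (m : ℤ) : ((p : ℚ)) ^ m ≠ 0 := zpow_ne_zero m pQ_ne

lemma val_zpow_mul {a : ℚ} (ha : a ≠ 0) (m : ℤ) :
    padicValRat p ((p : ℚ) ^ m * a) = m + padicValRat p a := by
  rw [padicValRat.mul (pz_ne m) ha, val_p_zpow]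

lemma R_p_zpow {m : ℤ} (h : 0 ≤ m) : R p ((p : ℚ) ^ m) := by
  rw [R_val (pz_ne m), val_p_zpow]; exact h

lemma R_zpow_mul {a : ℚ} (m : ℤ) (h : 0 ≤ m + padicValRat p a) :
    R p ((p : ℚ) ^ m * a) := by
  rcases eq_or_ne a 0 with rfl | ha
  · simpa using R_zero
  · rw [R_val (mul_ne_zero (pz_ne m) ha), val_zpow_mul ha]; exact h

lemma Un_zpow_mul {a : ℚ} (ha : a ≠ 0) (m : ℤ) (h : m + padicValRat p a = 0) :
    Un p ((p : ℚ) ^ m * a) :=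
  ⟨mul_ne_zero (pz_ne m) ha, by rw [val_zpow_mul ha]; exact h⟩

/-- Scaling a finite family of rationals into `ℤ_(p)` with one of them a unit. -/
lemma scale_finite {n : ℕ} (g : Fin n → ℚ) (h : ∃ i, g i ≠ 0) :
    ∃ μ : ℚ, μ ≠ 0 ∧ (∀ i, R p (μ * g i)) ∧ ∃ i, Un p (μ * g i) := by
  classical
  obtain ⟨i₀, hi₀⟩ := h
  set S : Finset (Fin n) := Finset.univ.filter (fun i => g i ≠ 0) with hS
  have hSne : S.Nonempty := ⟨i₀, by simp [hS, hi₀]⟩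
  set m : ℤ := S.inf' hSne (fun i => padicValRat p (g i)) with hm
  refine ⟨(p : ℚ) ^ (-m), pz_ne _, ?_, ?_⟩
  · intro i
    rcases eq_or_ne (g i) 0 with h0 | h0
    · simpa [h0] using R_zero
    · apply R_zpow_mul
      have : m ≤ padicValRat p (g i) :=
        Finset.inf'_le _ (by simp [hS, h0])
      omega
  · obtain ⟨j, hj, hjm⟩ := Finset.exists_mem_eq_inf' hSne (fun i => padicValRat p (g i))
    have hj0 : g j ≠ 0 := by simpa [hS] using hj
    exact ⟨j, Un_zpow_mul hj0 _ (by omega)⟩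

abbrev V3 : Type := Fin 3 → ℚ

lemma R_sum {α : Type*} (s : Finset α) (g : α → ℚ) (h : ∀ a ∈ s, R p (g a)) :
    R p (∑ a ∈ s, g a) :=
  Finset.sum_induction g (fun x => R p x) (fun _ _ => R_add) R_zero h

/-- Abstract properties of a `ℤ_(p)`-lattice that we use. -/
structure LatP (p : ℕ) (B : Set V3) : Prop where
  zero : (0 : V3) ∈ B
  add : ∀ {x y : V3}, x ∈ B → y ∈ B → x + y ∈ B
  smul : ∀ {c : ℚ} {x : V3}, R p c → x ∈ B → c • x ∈ B
  spanT : Submodule.span ℚ B = ⊤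
  bdd : ∀ x : V3, x ≠ 0 → ∃ M : ℤ, ∀ m : ℤ, (p : ℚ) ^ m • x ∈ B → M ≤ m

lemma latP_sum (hB : LatP p B) {α : Type*} (s : Finset α) (g : α → V3)
    (h : ∀ a ∈ s, g a ∈ B) : (∑ a ∈ s, g a) ∈ B :=
  Finset.sum_induction g (fun x => x ∈ B) (fun _ _ => hB.add) hB.zero h

lemma mem_zpSpanV {s : Finset V3} {z : V3} :
    z ∈ zpSpanV p s ↔ ∃ f : V3 → ℚ, (∀ t, R p (f t)) ∧ z = ∑ t ∈ s, f t • t :=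
  Iff.rfl

lemma latP_of_isZpLatIn {B : Set V3} (h : IsZpLatIn p ⊤ B) : LatP p B := by
  obtain ⟨⟨s, rfl⟩, hspan⟩ := h
  classical
  constructor
  · exact ⟨0, fun t => R_zero, by simp⟩
  · rintro x y ⟨f, hf, rfl⟩ ⟨g, hg, rfl⟩
    exact ⟨f + g, fun t => R_add (hf t) (hg t), by
      rw [← Finset.sum_add_distrib]
      exact Finset.sum_congr rfl (fun t _ => (add_smul _ _ _).symm)⟩
  · rintro c x hc ⟨f, hf, rfl⟩
    exact ⟨fun t => c * f t, fun t => R_mul hc (hf t), by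
      rw [Finset.smul_sum]
      exact Finset.sum_congr rfl (fun t _ => by simp [smul_smul])⟩
  · simpa using hspan
  · -- boundedness
    set k : ℕ := s.sup (fun t => Finset.univ.sup (fun i => (- padicValRat p (t i)).toNat)) with hk
    have hbound : ∀ z ∈ zpSpanV p s, ∀ i, R p ((p : ℚ) ^ (k : ℤ) * z i) := by
      rintro z ⟨f, hf, rfl⟩ i
      have hz : (∑ t ∈ s, f t • t) i = ∑ t ∈ s, f t * t i := by
        rw [Finset.sum_apply]
        exact Finset.sum_congr rfl (fun t _ => rfl)
      rw [hz, Finset.mul_sum]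
      refine R_sum _ _ (fun t ht => ?_)
      have : (p : ℚ) ^ (k : ℤ) * (f t * t i) = f t * ((p : ℚ) ^ (k : ℤ) * t i) := by ring
      rw [this]
      refine R_mul (hf t) ?_
      rcases eq_or_ne (t i) 0 with h0 | h0
      · simpa [h0] using R_zero
      · refine R_zpow_mul _ ?_
        have h1 : (- padicValRat p (t i)).toNat ≤ k := by
          refine le_trans ?_ (Finset.le_sup ht)
          exact Finset.le_sup (f := fun j => (- padicValRat p (t j)).toNat) (Finset.mem_univ i)
        have h2 : - padicValRat p (t i) ≤ ((- padicValRat p (t i)).toNat : ℤ) :=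
          Int.self_le_toNat _
        have h3 : ((- padicValRat p (t i)).toNat : ℤ) ≤ (k : ℤ) := by exact_mod_cast h1
        linarith
    intro x hx
    have : ∃ i, x i ≠ 0 := by
      by_contra hcon
      push_neg at hcon
      exact hx (funext hcon)
    obtain ⟨i, hi⟩ := this
    refine ⟨- (k : ℤ) - padicValRat p (x i), fun m hm => ?_⟩
    have h1 := hbound _ hm i
    have h2 : ((p : ℚ) ^ m • x) i = (p : ℚ) ^ m * x i := rfl
    rw [h2, ← mul_assoc, ← zpow_add₀ (pQ_ne (p := p)), R_val] at h1
    · rw [val_zpow_mul hi] at h1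
      linarith
    · exact mul_ne_zero (pz_ne _) hi


section LatLemmas
variable {B : Set V3} {x y z : V3} {c : ℚ}

lemma R_pQ : R p ((p : ℚ)) := by
  have := R_natCast (p := p) p
  simpa using this

lemma pB_subset (hB : LatP p B) : pSMul p B ⊆ B := by
  rintro z ⟨b, hb, rfl⟩; exact hB.smul R_pQ hb

lemma pB_zero (hB : LatP p B) : (0 : V3) ∈ pSMul p B := ⟨0, hB.zero, by simp⟩

lemma pB_add (hB : LatP p B) (hx : x ∈ pSMul p B) (hy : y ∈ pSMul p B) :
    x + y ∈ pSMul p B := by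
  obtain ⟨a, ha, rfl⟩ := hx; obtain ⟨b, hb, rfl⟩ := hy
  exact ⟨a + b, hB.add ha hb, by rw [smul_add]⟩

lemma pB_smul (hB : LatP p B) (hc : R p c) (hx : x ∈ pSMul p B) :
    c • x ∈ pSMul p B := by
  obtain ⟨a, ha, rfl⟩ := hx
  exact ⟨c • a, hB.smul hc ha, by rw [smul_comm]⟩

lemma pB_neg (hB : LatP p B) (hx : x ∈ pSMul p B) : -x ∈ pSMul p B := by
  have := pB_smul hB (R_intCast (-1)) hx
  simpa using this

lemma pB_sub (hB : LatP p B) (hx : x ∈ pSMul p B) (hy : y ∈ pSMul p B) :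
    x - y ∈ pSMul p B := by
  rw [sub_eq_add_neg]; exact pB_add hB hx (pB_neg hB hy)

lemma neg_mem (hB : LatP p B) (hx : x ∈ B) : -x ∈ B := by
  have := hB.smul (R_intCast (-1)) hx
  simpa using this

lemma sub_mem (hB : LatP p B) (hx : x ∈ B) (hy : y ∈ B) : x - y ∈ B := by
  rw [sub_eq_add_neg]; exact hB.add hx (neg_mem hB hy)

lemma smul_mem_pB (hB : LatP p B) (hc : DivP p c) (hx : x ∈ B) :
    c • x ∈ pSMul p B := by
  obtain ⟨u, hu, rfl⟩ := hc
  exact ⟨u • x, hB.smul hu hx, by rw [smul_smul]⟩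

lemma ne_zero_of_not_pB (hB : LatP p B) (hx : x ∉ pSMul p B) : x ≠ 0 := by
  rintro rfl; exact hx (pB_zero hB)

lemma nonR_inv {a : ℚ} (h : ¬ R p a) : a ≠ 0 ∧ DivP p a⁻¹ := by
  have ha : a ≠ 0 := by rintro rfl; exact h R_zero
  refine ⟨ha, ?_⟩
  have hv : ¬ (0 ≤ padicValRat p a) := fun hv => h ((R_val ha).mpr hv)
  refine DivP_def' (inv_ne_zero ha) ?_
  rw [val_inv]
  omega

lemma prim_scalar (hB : LatP p B) (hx : x ∈ B) (hx' : x ∉ pSMul p B)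
    (h : c • x ∈ B) : R p c := by
  by_contra hc
  obtain ⟨hc0, hdiv⟩ := nonR_inv hc
  have : x = c⁻¹ • (c • x) := by rw [smul_smul, inv_mul_cancel₀ hc0, one_smul]
  rw [this] at hx'
  exact hx' (smul_mem_pB hB hdiv h)

lemma prim_scalar_pB (hB : LatP p B) (hx : x ∈ B) (hx' : x ∉ pSMul p B)
    (h : c • x ∈ pSMul p B) : DivP p c := by
  rcases eq_or_ne c 0 with rfl | hc0
  · exact DivP_zero
  obtain ⟨b, hb, hbe⟩ := h
  have hmem : (c / p) • x ∈ B := by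
    have : (c / p) • x = b := by
      have : c • x = (p : ℚ) • b := hbe
      rw [div_eq_mul_inv, mul_comm, ← smul_smul, this, smul_smul,
        inv_mul_cancel₀ (pQ_ne (p := p)), one_smul]
    rw [this]; exact hb
  have : R p (c / p) := prim_scalar hB hx hx' hmem
  exact ⟨c / p, this, by have := pQ_ne (p := p); field_simp [mul_comm]⟩

lemma prim_scalar_unit (hB : LatP p B) (hx : x ∈ B) (hx' : x ∉ pSMul p B)
    (h1 : c • x ∈ B) (h2 : c • x ∉ pSMul p B) : Un p c := by
  have hR : R p c := prim_scalar hB hx hx' h1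
  rcases R_cases hR with h | h
  · exact absurd (smul_mem_pB hB h hx) h2
  · exact h

lemma un_smul_mem_iff (hB : LatP p B) {c : ℚ} (hc : Un p c) :
    c • x ∈ B ↔ x ∈ B := by
  constructor
  · intro h
    have : x = c⁻¹ • (c • x) := by rw [smul_smul, inv_mul_cancel₀ hc.1, one_smul]
    rw [this]; exact hB.smul (R_inv_of_Un hc) h
  · exact hB.smul (R_of_Un hc)

lemma un_smul_pB_iff (hB : LatP p B) {c : ℚ} (hc : Un p c) :
    c • x ∈ pSMul p B ↔ x ∈ pSMul p B := by
  constructor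
  · intro h
    have : x = c⁻¹ • (c • x) := by rw [smul_smul, inv_mul_cancel₀ hc.1, one_smul]
    rw [this]; exact pB_smul hB (R_inv_of_Un hc) h
  · exact pB_smul hB (R_of_Un hc)

/-- Every nonzero vector has a primitive multiple w.r.t. the lattice. -/
lemma exists_rep (hB : LatP p B) (hx : x ≠ 0) :
    ∃ c : ℚ, c ≠ 0 ∧ c • x ∈ B ∧ c • x ∉ pSMul p B := by
  classical
  -- the set of p-power exponents landing in B is nonempty
  have hxspan : x ∈ Submodule.span ℚ B := by rw [hB.spanT]; trivial
  obtain ⟨n, f, g, hfg⟩ := Submodule.mem_span_set'.mp hxspan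
  have hfne : ∃ i, f i ≠ 0 := by
    by_contra hcon
    push_neg at hcon
    apply hx
    rw [← hfg]
    simp [hcon]
  obtain ⟨μ, hμ0, hμR, -⟩ := scale_finite (p := p) f hfne
  have hμx : μ • x ∈ B := by
    rw [← hfg, Finset.smul_sum]
    refine latP_sum hB _ _ (fun i _ => ?_)
    rw [smul_smul]
    exact hB.smul (hμR i) (g i).2
  have hS : ∃ m : ℤ, (p : ℚ) ^ m • x ∈ B := by
    rcases eq_or_ne μ 0 with rfl | hμ
    · exact absurd rfl hμ0
    · refine ⟨(padicValRat p μ).toNat + 1, ?_⟩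
      have : (p : ℚ) ^ (((padicValRat p μ).toNat : ℤ) + 1) • x
          = ((p : ℚ) ^ (((padicValRat p μ).toNat : ℤ) + 1) * μ⁻¹) • (μ • x) := by
        rw [smul_smul, mul_assoc, inv_mul_cancel₀ hμ, mul_one]
      rw [this]
      refine hB.smul (R_zpow_mul _ ?_) hμx
      rw [val_inv]
      have := Int.self_le_toNat (padicValRat p μ)
      omega
  obtain ⟨M, hM⟩ := hB.bdd x hx
  obtain ⟨m₀, hm₀, hleast⟩ := Int.exists_least_of_bdd (P := fun m => (p : ℚ) ^ m • x ∈ B)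
    ⟨M, fun z hz => hM z hz⟩ hS
  refine ⟨(p : ℚ) ^ m₀, pz_ne _, hm₀, ?_⟩
  intro hmem
  obtain ⟨b, hb, hbe⟩ := hmem
  have : (p : ℚ) ^ (m₀ - 1) • x ∈ B := by
    have hb' : (p : ℚ) ^ (m₀ - 1) • x = b := by
      have h1 : (p : ℚ) ^ m₀ • x = (p : ℚ) • b := hbe
      have : (p : ℚ) ^ (m₀ - 1) • x = (p : ℚ)⁻¹ • ((p : ℚ) ^ m₀ • x) := by
        rw [smul_smul, ← zpow_neg_one, ← zpow_add₀ (pQ_ne (p := p))]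
        ring_nf
      rw [this, h1, smul_smul, inv_mul_cancel₀ (pQ_ne (p := p)), one_smul]
    rw [hb']; exact hb
  have := hleast _ this
  omega

end LatLemmas

section RelLemmas
variable {B : Set V3} {x y z : V3} {c : ℚ}

lemma rel_of_reps {a b : ℚ} (ha : a ≠ 0) (hb : b ≠ 0)
    (h1 : a • x ∈ B) (h2 : a • x ∉ pSMul p B)
    (h3 : b • y ∈ B) (h4 : b • y ∉ pSMul p B)
    (h5 : a • x - b • y ∈ pSMul p B) : ZpRelV p B x y :=
  ⟨a • x, b • y, ⟨a, ha, rfl⟩, ⟨b, hb, rfl⟩, h1, h2, h3, h4, h5⟩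

lemma sub_pB_rel (hB : LatP p B) (hx : x ∈ B) (hx' : x ∉ pSMul p B)
    (hy : y ∈ B) (hy' : y ∉ pSMul p B) (h : x - y ∈ pSMul p B) :
    ZpRelV p B x y := by
  refine rel_of_reps one_ne_zero one_ne_zero ?_ ?_ ?_ ?_ ?_ <;> simp [hx, hx', hy, hy', h]

lemma rel_refl_mem (hB : LatP p B) (hx : x ∈ B) (hx' : x ∉ pSMul p B) :
    ZpRelV p B x x :=
  sub_pB_rel hB hx hx' hx hx' (by simpa using pB_zero hB)

lemma rel_refl (hB : LatP p B) (hx : x ≠ 0) : ZpRelV p B x x := by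
  obtain ⟨c, hc0, hc1, hc2⟩ := exists_rep hB hx
  refine rel_of_reps hc0 hc0 hc1 hc2 hc1 hc2 (by simpa using pB_zero hB)

lemma rel_symm (hB : LatP p B) (h : ZpRelV p B x y) : ZpRelV p B y x := by
  obtain ⟨x', y', ⟨a, ha, rfl⟩, ⟨b, hb, rfl⟩, h1, h2, h3, h4, h5⟩ := h
  refine rel_of_reps hb ha h3 h4 h1 h2 ?_
  have := pB_neg hB h5
  simpa using this

lemma rel_smul_left (hc : c ≠ 0) (h : ZpRelV p B x y) : ZpRelV p B (c • x) y := by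
  obtain ⟨x', y', ⟨a, ha, rfl⟩, hy', h1, h2, h3, h4, h5⟩ := h
  exact ⟨(a * c⁻¹) • (c • x), y', ⟨a * c⁻¹, mul_ne_zero ha (inv_ne_zero hc), rfl⟩, hy',
    by rwa [smul_smul, mul_assoc, inv_mul_cancel₀ hc, mul_one],
    by rwa [smul_smul, mul_assoc, inv_mul_cancel₀ hc, mul_one],
    h3, h4, by rwa [smul_smul, mul_assoc, inv_mul_cancel₀ hc, mul_one]⟩

lemma rel_smul_left_iff (hc : c ≠ 0) : ZpRelV p B (c • x) y ↔ ZpRelV p B x y := by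
  constructor
  · intro h
    have := rel_smul_left (inv_ne_zero hc) h
    rwa [smul_smul, inv_mul_cancel₀ hc, one_smul] at this
  · exact rel_smul_left hc

lemma rel_smul_right (hB : LatP p B) (hc : c ≠ 0) :
    ZpRelV p B x (c • y) ↔ ZpRelV p B x y := by
  constructor
  · intro h
    have := rel_smul_left (c := c⁻¹) (inv_ne_zero hc) (rel_symm hB h)
    rw [smul_smul, inv_mul_cancel₀ hc, one_smul] at this
    exact rel_symm hB this
  · intro h
    exact rel_symm hB (rel_smul_left hc (rel_symm hB h))

lemma rel_trans (hB : LatP p B) (h1 : ZpRelV p B x y) (h2 : ZpRelV p B y z) :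
    ZpRelV p B x z := by
  obtain ⟨x', y', ⟨a, ha, rfl⟩, ⟨b, hb, rfl⟩, m1, m2, m3, m4, m5⟩ := h1
  obtain ⟨y'', z', ⟨b', hb', rfl⟩, ⟨cc, hcc, rfl⟩, n1, n2, n3, n4, n5⟩ := h2
  have hlam : Un p (b / b') := by
    refine prim_scalar_unit hB n1 n2 ?_ ?_
    · have : (b / b') • b' • y = b • y := by
        rw [smul_smul, div_mul_cancel₀ _ hb']
      rw [this]; exact m3
    · have : (b / b') • b' • y = b • y := by
        rw [smul_smul, div_mul_cancel₀ _ hb']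
      rw [this]; exact m4
  set lam := b / b' with hlamdef
  refine rel_of_reps ha (b := lam * cc) (mul_ne_zero hlam.1 hcc) m1 m2 ?_ ?_ ?_
  · rw [← smul_smul]
    exact (un_smul_mem_iff hB hlam).mpr n3
  · rw [← smul_smul]
    exact fun hm => n4 ((un_smul_pB_iff hB hlam).mp hm)
  · have key : a • x - (lam * cc) • z
        = (a • x - b • y) + lam • (b' • y - cc • z) := by
      rw [smul_sub, smul_smul, smul_smul, hlamdef, div_mul_cancel₀ _ hb']
      abel
    rw [key]
    exact pB_add hB m5 (pB_smul hB (R_of_Un hlam) n5)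

lemma rel_norm_mp (hB : LatP p B) (hx : x ∈ B) (hx' : x ∉ pSMul p B)
    (hy : y ∈ B) (hy' : y ∉ pSMul p B) (h : ZpRelV p B x y) :
    ∃ lam : ℚ, Un p lam ∧ x - lam • y ∈ pSMul p B := by
  obtain ⟨x', y', ⟨a, ha, rfl⟩, ⟨b, hb, rfl⟩, m1, m2, m3, m4, m5⟩ := h
  have hUa : Un p a := prim_scalar_unit hB hx hx' m1 m2
  have hUb : Un p b := prim_scalar_unit hB hy hy' m3 m4
  refine ⟨b * a⁻¹, Un_mul hUb (Un_inv hUa), ?_⟩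
  have : x - (b * a⁻¹) • y = a⁻¹ • (a • x - b • y) := by
    rw [smul_sub, smul_smul, smul_smul, inv_mul_cancel₀ hUa.1, one_smul, mul_comm]
  rw [this]
  exact pB_smul hB (R_inv_of_Un hUa) m5

lemma rel_norm_mpr (hB : LatP p B) (hx : x ∈ B) (hx' : x ∉ pSMul p B)
    (hy : y ∈ B) (hy' : y ∉ pSMul p B) {lam : ℚ} (hlam : Un p lam)
    (h : x - lam • y ∈ pSMul p B) : ZpRelV p B x y :=
  rel_of_reps one_ne_zero hlam.1 (by simpa using hx) (by simpa using hx')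
    ((un_smul_mem_iff hB hlam).mpr hy)
    (fun hm => hy' ((un_smul_pB_iff hB hlam).mp hm)) (by simpa using h)

end RelLemmas

section LineLemmas
variable {B : Set V3} {q w x y z X : V3} {a b c d : ℚ}

lemma mem_resLine : z ∈ resLineV p B q w ↔
    ∃ a b : ℚ, R p a ∧ R p b ∧ ∃ y ∈ pSMul p B, z = a • q + b • w + y := Iff.rfl

lemma resLine_intro (ha : R p a) (hb : R p b) (hy : y ∈ pSMul p B) :
    a • q + b • w + y ∈ resLineV p B q w := ⟨a, b, ha, hb, y, hy, rfl⟩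

lemma q_mem_resLine (hB : LatP p B) : q ∈ resLineV p B q w := by
  have := resLine_intro (p := p) (B := B) (q := q) (w := w) (y := 0)
    R_one R_zero (pB_zero hB)
  simpa using this

lemma w_mem_resLine (hB : LatP p B) : w ∈ resLineV p B q w := by
  have := resLine_intro (p := p) (B := B) (q := q) (w := w) (y := 0)
    R_zero R_one (pB_zero hB)
  simpa using this

lemma pB_subset_resLine (hB : LatP p B) : pSMul p B ⊆ resLineV p B q w := by
  intro y hy
  have := resLine_intro (p := p) (B := B) (q := q) (w := w) R_zero R_zero hy
  simpa using this

lemma resLine_subset_B (hB : LatP p B) (hq : q ∈ B) (hw : w ∈ B) :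
    resLineV p B q w ⊆ B := by
  rintro z ⟨a, b, ha, hb, y, hy, rfl⟩
  exact hB.add (hB.add (hB.smul ha hq) (hB.smul hb hw)) (pB_subset hB hy)

lemma resLine_add (hB : LatP p B) (h1 : x ∈ resLineV p B q w)
    (h2 : y ∈ resLineV p B q w) : x + y ∈ resLineV p B q w := by
  obtain ⟨a, b, ha, hb, u, hu, rfl⟩ := h1
  obtain ⟨a', b', ha', hb', u', hu', rfl⟩ := h2
  refine ⟨a + a', b + b', R_add ha ha', R_add hb hb', u + u', pB_add hB hu hu', ?_⟩
  module

lemma resLine_smul (hB : LatP p B) (hc : R p c) (h : x ∈ resLineV p B q w) :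
    c • x ∈ resLineV p B q w := by
  obtain ⟨a, b, ha, hb, u, hu, rfl⟩ := h
  refine ⟨c * a, c * b, R_mul hc ha, R_mul hc hb, c • u, pB_smul hB hc hu, ?_⟩
  module

lemma resLine_neg (hB : LatP p B) (h : x ∈ resLineV p B q w) :
    -x ∈ resLineV p B q w := by
  have := resLine_smul hB (R_intCast (-1)) h
  simpa using this

lemma resLine_sub (hB : LatP p B) (h1 : x ∈ resLineV p B q w)
    (h2 : y ∈ resLineV p B q w) : x - y ∈ resLineV p B q w := by
  rw [sub_eq_add_neg]; exact resLine_add hB h1 (resLine_neg hB h2)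

variable (hB : LatP p B) (hq : q ∈ B \ pSMul p B) (hw : w ∈ B \ pSMul p B)
  (hqw : ¬ ZpRelV p B q w)

include hB hq hw hqw in
lemma extract_qw (ha : R p a) (hb : R p b) (h : a • q + b • w ∈ pSMul p B) :
    DivP p a ∧ DivP p b := by
  rcases R_cases hb with hDb | hUb
  · have h1 : a • q ∈ pSMul p B := by
      have : a • q = (a • q + b • w) - b • w := by abel
      rw [this]
      exact pB_sub hB h (smul_mem_pB hB hDb hw.1)
    exact ⟨prim_scalar_pB hB hq.1 hq.2 h1, hDb⟩
  · exfalso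
    have h2 : w - (-(b⁻¹ * a)) • q ∈ pSMul p B := by
      have h3 := pB_smul hB (R_inv_of_Un hUb) h
      have : b⁻¹ • (a • q + b • w) = w - (-(b⁻¹ * a)) • q := by
        rw [smul_add, smul_smul, smul_smul, inv_mul_cancel₀ hUb.1, one_smul]
        module
      rwa [this] at h3
    have hν : R p (-(b⁻¹ * a)) := R_neg (R_mul (R_inv_of_Un hUb) ha)
    rcases R_cases hν with hD | hU
    · apply hw.2
      have : w = (w - (-(b⁻¹ * a)) • q) + (-(b⁻¹ * a)) • q := by abel
      rw [this]
      exact pB_add hB h2 (smul_mem_pB hB hD hq.1)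
    · exact hqw (rel_symm hB (rel_norm_mpr hB hw.1 hw.2 hq.1 hq.2 hU h2))

include hB hq hw hqw in
lemma extract_qwX (hX : X ∈ B) (hX' : X ∉ pSMul p B) (hXRL : X ∉ resLineV p B q w)
    (ha : R p a) (hb : R p b) (hc : R p c)
    (h : a • q + b • w + c • X ∈ pSMul p B) :
    DivP p a ∧ DivP p b ∧ DivP p c := by
  rcases R_cases hc with hDc | hUc
  · have h1 : a • q + b • w ∈ pSMul p B := by
      have : a • q + b • w = (a • q + b • w + c • X) - c • X := by abel
      rw [this]
      exact pB_sub hB h (smul_mem_pB hB hDc hX)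
    obtain ⟨hDa, hDb⟩ := extract_qw hB hq hw hqw ha hb h1
    exact ⟨hDa, hDb, hDc⟩
  · exfalso
    apply hXRL
    have h3 := pB_smul hB (R_inv_of_Un hUc) h
    have heq : c⁻¹ • (a • q + b • w + c • X) = (c⁻¹ * a) • q + (c⁻¹ * b) • w + X := by
      rw [smul_add, smul_add, smul_smul, smul_smul, smul_smul, inv_mul_cancel₀ hUc.1, one_smul]
    rw [heq] at h3
    have : X = (-(c⁻¹ * a)) • q + (-(c⁻¹ * b)) • w + ((c⁻¹ * a) • q + (c⁻¹ * b) • w + X) := by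
      module
    rw [this]
    exact resLine_intro (R_neg (R_mul (R_inv_of_Un hUc) ha))
      (R_neg (R_mul (R_inv_of_Un hUc) hb)) h3

include hB hq hw hqw in
lemma lin_elem (ha : R p a) (hb : Un p b) :
    (a • q + b • w) ∈ resLineV p B q w ∧ (a • q + b • w) ∉ pSMul p B ∧
      ¬ ZpRelV p B (a • q + b • w) q := by
  have hmem : (a • q + b • w) ∈ resLineV p B q w := by
    have := resLine_intro (p := p) (B := B) (q := q) (w := w) (y := 0) ha
      (R_of_Un hb) (pB_zero hB)
    simpa using this
  have hnp : (a • q + b • w) ∉ pSMul p B := by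
    intro hmem'
    exact Un_not_DivP hb (extract_qw hB hq hw hqw ha (R_of_Un hb) hmem').2
  refine ⟨hmem, hnp, ?_⟩
  intro hrel
  have hzB : (a • q + b • w) ∈ B := resLine_subset_B hB hq.1 hw.1 hmem
  obtain ⟨lam, hUlam, hlam⟩ := rel_norm_mp hB hzB hnp hq.1 hq.2 hrel
  have : (a - lam) • q + b • w ∈ pSMul p B := by
    have heq : (a - lam) • q + b • w = (a • q + b • w) - lam • q := by module
    rw [heq]; exact hlam
  exact Un_not_DivP hb (extract_qw hB hq hw hqw (R_sub ha (R_of_Un hUlam)) (R_of_Un hb) this).2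

omit hq hw hqw in
lemma line_transfer (hB : LatP p B) (h : d • x ∈ resLineV p B q w)
    (hd2 : d • x ∉ pSMul p B) (hqB : q ∈ B) (hwB : w ∈ B)
    (hc1 : c • x ∈ B) (hc2 : c • x ∉ pSMul p B) : c • x ∈ resLineV p B q w := by
  have hd1 : d • x ∈ B := resLine_subset_B hB hqB hwB h
  have hd0 : d ≠ 0 := by
    rintro rfl; rw [zero_smul] at hd2; exact hd2 (pB_zero hB)
  have hU : Un p (c / d) := by
    refine prim_scalar_unit hB hd1 hd2 ?_ ?_
    · have : (c / d) • d • x = c • x := by rw [smul_smul, div_mul_cancel₀ _ hd0]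
      rw [this]; exact hc1
    · have : (c / d) • d • x = c • x := by rw [smul_smul, div_mul_cancel₀ _ hd0]
      rw [this]; exact hc2
  have := resLine_smul hB (R_of_Un hU) h
  rwa [smul_smul, div_mul_cancel₀ _ hd0] at this

include hq in
omit hw hqw in
lemma rel_to_line (hB : LatP p B) (h : ZpRelV p B x q) :
    ∃ c : ℚ, c ≠ 0 ∧ c • x ∈ resLineV p B q w \ pSMul p B := by
  obtain ⟨x', y', ⟨a, ha, rfl⟩, ⟨b, hb, rfl⟩, m1, m2, m3, m4, m5⟩ := h
  have hUb : Un p b := prim_scalar_unit hB hq.1 hq.2 m3 m4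
  refine ⟨a, ha, ?_, m2⟩
  have : a • x = b • q + (a • x - b • q) := by abel
  rw [this]
  have h1 : b • q ∈ resLineV p B q w :=
    resLine_smul hB (R_of_Un hUb) (q_mem_resLine hB)
  exact resLine_add hB h1 (pB_subset_resLine hB m5)

end LineLemmas

section ValueChar
open Projectivization

/-- "x reduces into the residue line through q,w". -/
def LineCl (p : ℕ) (B : Set V3) (q w : V3) (x : V3) : Prop :=
  ∃ c : ℚ, c ≠ 0 ∧ c • x ∈ resLineV p B q w \ pSMul p B

variable {A : Type*} {B : Set V3} {q w : V3}
  {f : Projectivization ℚ (Fin 3 → ℚ) → A} {a₁ a₂ a₃ : A} {x : V3}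

variable (hB : LatP p B) (hq : q ∈ B \ pSMul p B) (hw : w ∈ B \ pSMul p B)
  (hqw : ¬ ZpRelV p B q w)
  (hoff : ∀ x : Fin 3 → ℚ, ∀ hx : x ≠ 0,
      (∃ a : ℚ, a ≠ 0 ∧ a • x ∈ (B \ pSMul p B) ∧ a • x ∉ resLineV p B q w) →
      f (Projectivization.mk ℚ x hx) = a₁)
  (hlin : ∀ x : Fin 3 → ℚ, ∀ hx : x ≠ 0,
      (∃ a : ℚ, a ≠ 0 ∧ a • x ∈ resLineV p B q w \ pSMul p B) → ¬ ZpRelV p B x q →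
      f (Projectivization.mk ℚ x hx) = a₂)
  (hpt : ∀ x : Fin 3 → ℚ, ∀ hx : x ≠ 0, ZpRelV p B x q →
      f (Projectivization.mk ℚ x hx) = a₃)

include hB hq hw hqw hoff hlin hpt in
lemma coverage (hx : x ≠ 0) :
    (f (Projectivization.mk ℚ x hx) = a₁ ∧ ¬ LineCl p B q w x ∧ ¬ ZpRelV p B x q)
    ∨ (f (Projectivization.mk ℚ x hx) = a₂ ∧ LineCl p B q w x ∧ ¬ ZpRelV p B x q)
    ∨ (f (Projectivization.mk ℚ x hx) = a₃ ∧ ZpRelV p B x q) := by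
  obtain ⟨c, hc0, hc1, hc2⟩ := exists_rep hB hx
  by_cases hRL : c • x ∈ resLineV p B q w
  · by_cases hrel : ZpRelV p B x q
    · exact Or.inr (Or.inr ⟨hpt x hx hrel, hrel⟩)
    · exact Or.inr (Or.inl ⟨hlin x hx ⟨c, hc0, hRL, hc2⟩ hrel, ⟨c, hc0, hRL, hc2⟩, hrel⟩)
  · left
    have hnL : ¬ LineCl p B q w x := by
      rintro ⟨d, hd0, hd1, hd2⟩
      exact hRL (line_transfer hB hd1 hd2 hq.1 hw.1 hc1 hc2)
    have hnrel : ¬ ZpRelV p B x q := by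
      intro hrel
      obtain ⟨d, hd0, hd⟩ := rel_to_line (w := w) hq hB hrel
      exact hnL ⟨d, hd0, hd⟩
    exact ⟨hoff x hx ⟨c, hc0, ⟨hc1, hc2⟩, hRL⟩, hnL, hnrel⟩

variable (h12 : a₁ ≠ a₂) (h13 : a₁ ≠ a₃) (h23 : a₂ ≠ a₃)

include hB hq hw hqw hoff hlin hpt h12 h13 h23 in
lemma char3 (hx : x ≠ 0) :
    f (Projectivization.mk ℚ x hx) = a₃ ↔ ZpRelV p B x q := by
  constructor
  · intro hval
    rcases coverage hB hq hw hqw hoff hlin hpt hx with ⟨h, -, -⟩ | ⟨h, -, -⟩ | ⟨-, h⟩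
    · exact absurd (h.symm.trans hval) h13
    · exact absurd (h.symm.trans hval) h23
    · exact h
  · exact hpt x hx

include hB hq hw hqw hoff hlin hpt h12 h13 h23 in
lemma char2 (hx : x ≠ 0) :
    f (Projectivization.mk ℚ x hx) = a₂ ↔ (LineCl p B q w x ∧ ¬ ZpRelV p B x q) := by
  constructor
  · intro hval
    rcases coverage hB hq hw hqw hoff hlin hpt hx with ⟨h, -, -⟩ | ⟨-, h1, h2⟩ | ⟨h, -⟩
    · exact absurd (h.symm.trans hval) h12
    · exact ⟨h1, h2⟩
    · exact absurd (hval.symm.trans h) h23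
  · intro ⟨h1, h2⟩
    exact hlin x hx h1 h2

include hB hq hw hqw hoff hlin hpt h12 h13 h23 in
lemma char1 (hx : x ≠ 0) :
    f (Projectivization.mk ℚ x hx) = a₁ ↔ ¬ LineCl p B q w x := by
  constructor
  · intro hval
    rcases coverage hB hq hw hqw hoff hlin hpt hx with ⟨-, h, -⟩ | ⟨h, -, -⟩ | ⟨h, hrel⟩
    · exact h
    · exact absurd (h.symm.trans hval).symm h12
    · exact absurd (h.symm.trans hval).symm h13
  · intro hnL
    rcases coverage hB hq hw hqw hoff hlin hpt hx with ⟨h, -, -⟩ | ⟨-, h1, -⟩ | ⟨-, hrel⟩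
    · exact h
    · exact absurd h1 hnL
    · obtain ⟨d, hd0, hd⟩ := rel_to_line (w := w) hq hB hrel
      exact absurd ⟨d, hd0, hd⟩ hnL

include hB hq hw hqw hoff hlin hpt h12 h13 h23 in
lemma charL (hx : x ≠ 0) :
    LineCl p B q w x ↔
      (f (Projectivization.mk ℚ x hx) = a₂ ∨ f (Projectivization.mk ℚ x hx) = a₃) := by
  constructor
  · intro hL
    rcases coverage hB hq hw hqw hoff hlin hpt hx with ⟨-, h, -⟩ | ⟨h, -, -⟩ | ⟨h, -⟩
    · exact absurd hL h
    · exact Or.inl h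
    · exact Or.inr h
  · rintro (h | h)
    · exact ((char2 hB hq hw hqw hoff hlin hpt h12 h13 h23 hx).mp h).1
    · obtain ⟨d, hd0, hd⟩ := rel_to_line (w := w) hq hB
        ((char3 hB hq hw hqw hoff hlin hpt h12 h13 h23 hx).mp h)
      exact ⟨d, hd0, hd⟩

end ValueChar

section Core2
variable {B : Set V3} {q w X Y : V3}

lemma pB_comb_unit (hB : LatP p B) (hX : X ∈ B) (hX' : X ∉ pSMul p B)
    (hY : Y ∈ B) (hY' : Y ∉ pSMul p B) (hnR : ¬ ZpRelV p B X Y) {α β : ℚ}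
    (hα : Un p α) (hβ : R p β) (h : α • X + β • Y ∈ pSMul p B) : False := by
  have h2 : X - (-(α⁻¹ * β)) • Y ∈ pSMul p B := by
    have h3 := pB_smul hB (R_inv_of_Un hα) h
    have heq : α⁻¹ • (α • X + β • Y) = X - (-(α⁻¹ * β)) • Y := by
      rw [smul_add, smul_smul, inv_mul_cancel₀ hα.1, one_smul, smul_smul]
      module
    rwa [heq] at h3
  have hν : R p (-(α⁻¹ * β)) := R_neg (R_mul (R_inv_of_Un hα) hβ)
  rcases R_cases hν with hD | hU
  · apply hX'
    have : X = (X - (-(α⁻¹ * β)) • Y) + (-(α⁻¹ * β)) • Y := by abel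
    rw [this]
    exact pB_add hB h2 (smul_mem_pB hB hD hY)
  · exact hnR (rel_norm_mpr hB hX hX' hY hY' hU h2)

lemma S2core (hB : LatP p B) (hq : q ∈ B \ pSMul p B) (hw : w ∈ B \ pSMul p B)
    {x y : V3} (hLx : LineCl p B q w x) (hLy : LineCl p B q w y)
    (hnR : ¬ ZpRelV p B x y) (s t : ℚ) (h0 : s • x + t • y ≠ 0) :
    LineCl p B q w (s • x + t • y) := by
  obtain ⟨cx, hcx0, hcx1, hcx2⟩ := hLx
  obtain ⟨cy, hcy0, hcy1, hcy2⟩ := hLy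
  have hXB : cx • x ∈ B := resLine_subset_B hB hq.1 hw.1 hcx1
  have hYB : cy • y ∈ B := resLine_subset_B hB hq.1 hw.1 hcy1
  have hne : ∃ i, ![s / cx, t / cy] i ≠ 0 := by
    by_contra hcon
    push_neg at hcon
    have hs := hcon 0
    have ht := hcon 1
    simp only [Matrix.cons_val_zero, Matrix.cons_val_one, Matrix.head_cons,
      div_eq_zero_iff] at hs ht
    apply h0
    rcases hs with hs | hs
    · rcases ht with ht | ht
      · rw [hs, ht, zero_smul, zero_smul, add_zero]
      · exact absurd ht hcy0
    · exact absurd hs hcx0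
  obtain ⟨μ, hμ0, hμR, j, hUj⟩ := scale_finite (p := p) _ hne
  have heq : μ • (s • x + t • y)
      = (μ * (s / cx)) • (cx • x) + (μ * (t / cy)) • (cy • y) := by
    rw [smul_smul, smul_smul, mul_assoc, mul_assoc, div_mul_cancel₀ _ hcx0,
      div_mul_cancel₀ _ hcy0, smul_add, smul_smul, smul_smul]
  refine ⟨μ, hμ0, ?_, ?_⟩
  · rw [heq]
    refine resLine_add hB (resLine_smul hB ?_ hcx1) (resLine_smul hB ?_ hcy1)
    · simpa using hμR 0
    · simpa using hμR 1
  · intro habs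
    rw [heq] at habs
    have hnR' : ¬ ZpRelV p B (cx • x) (cy • y) := by
      intro hr
      rw [rel_smul_left_iff hcx0, rel_smul_right hB hcy0] at hr
      exact hnR hr
    fin_cases j
    · simp only [Matrix.cons_val_zero] at hUj
      exact pB_comb_unit hB hXB hcx2 hYB hcy2 hnR' hUj (by simpa using hμR 1) habs
    · simp only [Matrix.cons_val_one, Matrix.head_cons] at hUj
      rw [add_comm] at habs
      exact pB_comb_unit hB hYB hcy2 hXB hcx2 (fun h => hnR' (rel_symm hB h)) hUj
        (by simpa using hμR 0) habs
end Core2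

section Swap
open Projectivization

variable {A : Type*} {B B' : Set V3} {q w q' w' : V3}
  {f : Projectivization ℚ (Fin 3 → ℚ) → A} {a₁ a₂ a₃ a₁' a₂' a₃' : A}

variable (hB : LatP p B) (hq : q ∈ B \ pSMul p B) (hw : w ∈ B \ pSMul p B)
  (hqw : ¬ ZpRelV p B q w)
  (hoff : ∀ x : Fin 3 → ℚ, ∀ hx : x ≠ 0,
      (∃ a : ℚ, a ≠ 0 ∧ a • x ∈ (B \ pSMul p B) ∧ a • x ∉ resLineV p B q w) →
      f (Projectivization.mk ℚ x hx) = a₁)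
  (hlin : ∀ x : Fin 3 → ℚ, ∀ hx : x ≠ 0,
      (∃ a : ℚ, a ≠ 0 ∧ a • x ∈ resLineV p B q w \ pSMul p B) → ¬ ZpRelV p B x q →
      f (Projectivization.mk ℚ x hx) = a₂)
  (hpt : ∀ x : Fin 3 → ℚ, ∀ hx : x ≠ 0, ZpRelV p B x q →
      f (Projectivization.mk ℚ x hx) = a₃)
  (h12 : a₁ ≠ a₂) (h13 : a₁ ≠ a₃) (h23 : a₂ ≠ a₃)
  (hB' : LatP p B') (hq' : q' ∈ B' \ pSMul p B') (hw' : w' ∈ B' \ pSMul p B')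
  (hqw' : ¬ ZpRelV p B' q' w')
  (hoff' : ∀ x : Fin 3 → ℚ, ∀ hx : x ≠ 0,
      (∃ a : ℚ, a ≠ 0 ∧ a • x ∈ (B' \ pSMul p B') ∧ a • x ∉ resLineV p B' q' w') →
      f (Projectivization.mk ℚ x hx) = a₁')
  (hlin' : ∀ x : Fin 3 → ℚ, ∀ hx : x ≠ 0,
      (∃ a : ℚ, a ≠ 0 ∧ a • x ∈ resLineV p B' q' w' \ pSMul p B') → ¬ ZpRelV p B' x q' →
      f (Projectivization.mk ℚ x hx) = a₂')
  (hpt' : ∀ x : Fin 3 → ℚ, ∀ hx : x ≠ 0, ZpRelV p B' x q' →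
      f (Projectivization.mk ℚ x hx) = a₃')
  (h12' : a₁' ≠ a₂') (h13' : a₁' ≠ a₃') (h23' : a₂' ≠ a₃')
  (hA3 : a₃ = a₃') (hA1 : a₂' = a₁)

include hB hq hw hqw hoff hlin hpt h12 h13 h23 hB' hq' hw' hqw' hoff' hlin' hpt'
  h12' h13' h23' hA3 hA1 in
lemma keyContra (x y : V3) (hx0 : x ≠ 0) (hy0 : y ≠ 0)
    (hLx : LineCl p B' q' w' x) (hLy : LineCl p B' q' w' y)
    (hnR : ¬ ZpRelV p B' x y) {a b cy c : ℚ} (ha : R p a) (hb : Un p b)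
    (heq : a • q + b • w = cy • y - c • x) : False := by
  obtain ⟨hzRL, hzPB, hzRel⟩ := lin_elem hB hq hw hqw ha hb
  have hz0 : a • q + b • w ≠ 0 := ne_zero_of_not_pB hB hzPB
  have hfz2 : f (Projectivization.mk ℚ (a • q + b • w) hz0) = a₂ :=
    (char2 hB hq hw hqw hoff hlin hpt h12 h13 h23 hz0).mpr
      ⟨⟨1, one_ne_zero, by simpa using And.intro hzRL hzPB⟩, hzRel⟩
  have hcomb : a • q + b • w = (-c) • x + cy • y := by rw [heq]; module
  have hLz : LineCl p B' q' w' (a • q + b • w) := by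
    rw [hcomb]
    exact S2core hB' hq' hw' hLx hLy hnR (-c) cy (by rw [← hcomb]; exact hz0)
  rcases (charL hB' hq' hw' hqw' hoff' hlin' hpt' h12' h13' h23' hz0).mp hLz with h | h
  · exact h12 (hfz2.symm.trans (h.trans hA1)).symm
  · exact h23 (hfz2.symm.trans (h.trans hA3.symm))

include hB hq hw hqw hoff hlin hpt h12 h13 h23 hB' hq' hw' hqw' hoff' hlin' hpt'
  h12' h13' h23' hA3 hA1 in
lemma pairContra (x y : V3) (hx0 : x ≠ 0) (hy0 : y ≠ 0)
    (hLx' : LineCl p B' q' w' x) (hLy' : LineCl p B' q' w' y)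
    (hnR' : ¬ ZpRelV p B' x y)
    (hnLx : ¬ LineCl p B q w x) (hnLy : ¬ LineCl p B q w y) : False := by
  obtain ⟨cx, hcx0, hcx1, hcx2⟩ := exists_rep hB hx0
  obtain ⟨cy, hcy0, hcy1, hcy2⟩ := exists_rep hB hy0
  have hXRL : cx • x ∉ resLineV p B q w := fun h => hnLx ⟨cx, hcx0, h, hcx2⟩
  have hYRL : cy • y ∉ resLineV p B q w := fun h => hnLy ⟨cy, hcy0, h, hcy2⟩
  have hdep : ¬ LinearIndependent ℚ ![cy • y, q, w, cx • x] := by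
    intro hli
    have := hli.fintype_card_le_finrank
    simp [Module.finrank_pi] at this
  obtain ⟨g, hsum, i0, hgne⟩ := Fintype.not_linearIndependent_iff.mp hdep
  obtain ⟨μ, hμ0, hμR, j, hUj⟩ := scale_finite (p := p) g ⟨i0, hgne⟩
  have hexp : g 0 • (cy • y) + g 1 • q + g 2 • w + g 3 • (cx • x) = 0 := by
    rw [Fin.sum_univ_four] at hsum
    simpa using hsum
  have hsum2 : (μ * g 0) • (cy • y) +
      ((μ * g 1) • q + (μ * g 2) • w + (μ * g 3) • (cx • x)) = 0 := by
    have hmod : (μ * g 0) • (cy • y) +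
        ((μ * g 1) • q + (μ * g 2) • w + (μ * g 3) • (cx • x))
        = μ • (g 0 • (cy • y) + g 1 • q + g 2 • w + g 3 • (cx • x)) := by
      module
    rw [hmod, hexp, smul_zero]
  have hUn0 : Un p (μ * g 0) := by
    rcases R_cases (hμR 0) with hD | hU
    · exfalso
      have h' : (μ * g 1) • q + (μ * g 2) • w + (μ * g 3) • (cx • x)
          = -((μ * g 0) • (cy • y)) := by
        rw [add_comm] at hsum2
        exact eq_neg_of_add_eq_zero_left hsum2
      have hmem : (μ * g 1) • q + (μ * g 2) • w + (μ * g 3) • (cx • x) ∈ pSMul p B := by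
        rw [h', ← neg_smul]
        exact smul_mem_pB hB (DivP_neg hD) hcy1
      obtain ⟨d1, d2, d3⟩ :=
        extract_qwX hB hq hw hqw hcx1 hcx2 hXRL (hμR 1) (hμR 2) (hμR 3) hmem
      fin_cases j
      exacts [Un_not_DivP hUj hD, Un_not_DivP hUj d1, Un_not_DivP hUj d2,
        Un_not_DivP hUj d3]
    · exact hU
  have hL0Y : (μ * g 0) • (cy • y)
      = -((μ * g 1) • q + (μ * g 2) • w + (μ * g 3) • (cx • x)) :=
    eq_neg_of_add_eq_zero_left hsum2
  have ha : R p (-((μ * g 0)⁻¹ * (μ * g 1))) := R_neg (R_mul (R_inv_of_Un hUn0) (hμR 1))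
  have hbR : R p (-((μ * g 0)⁻¹ * (μ * g 2))) := R_neg (R_mul (R_inv_of_Un hUn0) (hμR 2))
  have hcR : R p (-((μ * g 0)⁻¹ * (μ * g 3))) := R_neg (R_mul (R_inv_of_Un hUn0) (hμR 3))
  have hY : cy • y = (-((μ * g 0)⁻¹ * (μ * g 1))) • q + (-((μ * g 0)⁻¹ * (μ * g 2))) • w
      + (-((μ * g 0)⁻¹ * (μ * g 3))) • (cx • x) := by
    have h1 : cy • y = (μ * g 0)⁻¹ • ((μ * g 0) • (cy • y)) := by
      rw [smul_smul, inv_mul_cancel₀ hUn0.1, one_smul]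
    rw [h1, hL0Y]
    module
  set aa := -((μ * g 0)⁻¹ * (μ * g 1)) with haa
  set bb := -((μ * g 0)⁻¹ * (μ * g 2)) with hbb
  set cc := -((μ * g 0)⁻¹ * (μ * g 3)) with hcc
  have hUc : Un p cc := by
    rcases R_cases hcR with hD | hU
    · exfalso
      apply hYRL
      rw [hY]
      exact resLine_intro ha hbR (smul_mem_pB hB hD hcx1)
    · exact hU
  rcases R_cases hbR with hDb | hUb
  · -- b divisible: use the auxiliary point X₂ = cx • x + w
    have hX₂RL : cx • x + w ∉ resLineV p B q w := by
      intro h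
      apply hXRL
      have := resLine_sub hB h (w_mem_resLine hB)
      simpa using this
    have hX₂B : cx • x + w ∈ B := hB.add hcx1 hw.1
    have hX₂PB : cx • x + w ∉ pSMul p B := fun h => hX₂RL (pB_subset_resLine hB h)
    have hX₂0 : cx • x + w ≠ 0 := ne_zero_of_not_pB hB hX₂PB
    have hnLX₂ : ¬ LineCl p B q w (cx • x + w) := by
      rintro ⟨d, hd0, hd1, hd2⟩
      apply hX₂RL
      have := line_transfer (c := 1) hB hd1 hd2 hq.1 hw.1
        (by simpa using hX₂B) (by simpa using hX₂PB)
      simpa using this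
    have hfX₂ : f (Projectivization.mk ℚ (cx • x + w) hX₂0) = a₂' :=
      ((char1 hB hq hw hqw hoff hlin hpt h12 h13 h23 hX₂0).mpr hnLX₂).trans hA1.symm
    have hLX₂' : LineCl p B' q' w' (cx • x + w) ∧ ¬ ZpRelV p B' (cx • x + w) q' :=
      (char2 hB' hq' hw' hqw' hoff' hlin' hpt' h12' h13' h23' hX₂0).mp hfX₂
    by_cases hR2 : ZpRelV p B' x (cx • x + w)
    · have hnR2 : ¬ ZpRelV p B' (cx • x + w) y := fun h => hnR' (rel_trans hB' hR2 h)
      have hUbc : Un p (bb - cc) := by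
        have h1 : Un p (cc + -bb) := Un_add_DivP hUc (DivP_neg hDb)
        have h2 : bb - cc = -(cc + -bb) := by ring
        rw [h2]
        exact Un_neg h1
      refine keyContra hB hq hw hqw hoff hlin hpt h12 h13 h23 hB' hq' hw' hqw'
        hoff' hlin' hpt' h12' h13' h23' hA3 hA1 (cx • x + w) y hX₂0 hy0 hLX₂'.1 hLy' hnR2
        ha hUbc (cy := cy) (c := cc) ?_
      rw [hY]
      module
    · refine keyContra hB hq hw hqw hoff hlin hpt h12 h13 h23 hB' hq' hw' hqw'
        hoff' hlin' hpt' h12' h13' h23' hA3 hA1 x (cx • x + w) hx0 hX₂0 hLx' hLX₂'.1 hR2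
        R_zero Un_one (cy := 1) (c := cx) ?_
      module
  · -- b unit: direct contradiction
    refine keyContra hB hq hw hqw hoff hlin hpt h12 h13 h23 hB' hq' hw' hqw'
      hoff' hlin' hpt' h12' h13' h23' hA3 hA1 x y hx0 hy0 hLx' hLy' hnR'
      ha hUb (cy := cy) (c := cc * cx) ?_
    rw [hY]
    module

include hB hq hw hqw hoff hlin hpt h12 h13 h23 hB' hq' hw' hqw' hoff' hlin' hpt'
  h12' h13' h23' hA3 hA1 in
lemma no_swap : False := by
  have hw'0 : w' ≠ 0 := ne_zero_of_not_pB hB' hw'.2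
  obtain ⟨hy₀RL, hy₀PB, hy₀Rel⟩ := lin_elem hB' hq' hw' hqw' R_one Un_one
  have hy₀RL' : q' + w' ∈ resLineV p B' q' w' := by simpa using hy₀RL
  have hy₀PB' : q' + w' ∉ pSMul p B' := by simpa using hy₀PB
  have hy₀Rel' : ¬ ZpRelV p B' (q' + w') q' := by simpa using hy₀Rel
  have hy₀0 : q' + w' ≠ 0 := ne_zero_of_not_pB hB' hy₀PB'
  have hy₀B : q' + w' ∈ B' := hB'.add hq'.1 hw'.1
  have hx₀L' : LineCl p B' q' w' w' :=
    ⟨1, one_ne_zero, by simpa using And.intro (w_mem_resLine hB') hw'.2⟩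
  have hy₀L' : LineCl p B' q' w' (q' + w') :=
    ⟨1, one_ne_zero, by simpa using And.intro hy₀RL' hy₀PB'⟩
  have hnRxy : ¬ ZpRelV p B' w' (q' + w') := by
    intro hrel
    obtain ⟨lam, hUlam, hlam⟩ := rel_norm_mp hB' hw'.1 hw'.2 hy₀B hy₀PB' hrel
    have hmem : (-lam) • q' + (1 - lam) • w' ∈ pSMul p B' := by
      have heq2 : (-lam) • q' + (1 - lam) • w' = w' - lam • (q' + w') := by module
      rw [heq2]
      exact hlam
    have := (extract_qw hB' hq' hw' hqw' (R_neg (R_of_Un hUlam))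
      (R_sub R_one (R_of_Un hUlam)) hmem).1
    have hDlam : DivP p lam := by
      have h2 := DivP_neg this
      simpa using h2
    exact Un_not_DivP hUlam hDlam
  have hfx₀ : f (Projectivization.mk ℚ w' hw'0) = a₂' :=
    (char2 hB' hq' hw' hqw' hoff' hlin' hpt' h12' h13' h23' hw'0).mpr
      ⟨hx₀L', fun h => hqw' (rel_symm hB' h)⟩
  have hfy₀ : f (Projectivization.mk ℚ (q' + w') hy₀0) = a₂' :=
    (char2 hB' hq' hw' hqw' hoff' hlin' hpt' h12' h13' h23' hy₀0).mpr
      ⟨hy₀L', hy₀Rel'⟩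
  have hnLx₀ : ¬ LineCl p B q w w' :=
    (char1 hB hq hw hqw hoff hlin hpt h12 h13 h23 hw'0).mp (hfx₀.trans hA1)
  have hnLy₀ : ¬ LineCl p B q w (q' + w') :=
    (char1 hB hq hw hqw hoff hlin hpt h12 h13 h23 hy₀0).mp (hfy₀.trans hA1)
  exact pairContra hB hq hw hqw hoff hlin hpt h12 h13 h23 hB' hq' hw' hqw'
    hoff' hlin' hpt' h12' h13' h23' hA3 hA1 w' (q' + w') hw'0 hy₀0 hx₀L' hy₀L'
    hnRxy hnLx₀ hnLy₀

end Swap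

section Scale
variable {B B' : Set V3}

/-- The scaled lattice `p^m · B'`. -/
def sSet (p : ℕ) (m : ℤ) (B' : Set V3) : Set V3 := (fun t => (p : ℚ) ^ m • t) '' B'

lemma mem_sSet {m : ℤ} {z : V3} : z ∈ sSet p m B' ↔ (p : ℚ) ^ (-m) • z ∈ B' := by
  constructor
  · rintro ⟨t, ht, rfl⟩
    have : (p : ℚ) ^ (-m) • (p : ℚ) ^ m • t = t := by
      rw [smul_smul, ← zpow_add₀ (pQ_ne (p := p)), neg_add_cancel, zpow_zero, one_smul]
    rwa [this]
  · intro h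
    refine ⟨(p : ℚ) ^ (-m) • z, h, ?_⟩
    show (p : ℚ) ^ m • (p : ℚ) ^ (-m) • z = z
    rw [smul_smul, ← zpow_add₀ (pQ_ne (p := p)), add_neg_cancel, zpow_zero, one_smul]

lemma mem_pSMul_sSet {m : ℤ} {z : V3} :
    z ∈ pSMul p (sSet p m B') ↔ (p : ℚ) ^ (-m) • z ∈ pSMul p B' := by
  constructor
  · rintro ⟨b, hb, rfl⟩
    rw [mem_sSet] at hb
    refine ⟨(p : ℚ) ^ (-m) • b, hb, ?_⟩
    rw [smul_comm]
  · rintro ⟨b', hb', hbe⟩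
    refine ⟨(p : ℚ) ^ m • b', mem_sSet.mpr ?_, ?_⟩
    · have : (p : ℚ) ^ (-m) • (p : ℚ) ^ m • b' = b' := by
        rw [smul_smul, ← zpow_add₀ (pQ_ne (p := p)), neg_add_cancel, zpow_zero, one_smul]
      rwa [this]
    · have : z = (p : ℚ) ^ m • ((p : ℚ) ^ (-m) • z) := by
        rw [smul_smul, ← zpow_add₀ (pQ_ne (p := p)), add_neg_cancel, zpow_zero, one_smul]
      rw [this, hbe, smul_comm]

lemma latP_sSet (hB' : LatP p B') (m : ℤ) : LatP p (sSet p m B') := by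
  constructor
  · exact ⟨0, hB'.zero, by simp⟩
  · intro x y hx hy
    rw [mem_sSet] at hx hy ⊢
    rw [smul_add]
    exact hB'.add hx hy
  · intro c x hc hx
    rw [mem_sSet] at hx ⊢
    rw [smul_comm]
    exact hB'.smul hc hx
  · -- span
    have himg : sSet p m B' = (LinearMap.lsmul ℚ V3 ((p : ℚ) ^ m)) '' B' := rfl
    rw [himg, ← Submodule.map_span, hB'.spanT]
    rw [Submodule.map_top, LinearMap.range_eq_top]
    intro x
    refine ⟨(p : ℚ) ^ (-m) • x, ?_⟩
    simp only [LinearMap.lsmul_apply, smul_smul, ← zpow_add₀ (pQ_ne (p := p)),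
      add_neg_cancel, zpow_zero, one_smul]
  · intro x hx
    obtain ⟨M, hM⟩ := hB'.bdd x hx
    refine ⟨M + m, fun m' hm' => ?_⟩
    rw [mem_sSet, smul_smul, ← zpow_add₀ (pQ_ne (p := p))] at hm'
    have := hM _ hm'
    omega

lemma rel_sSet (hB' : LatP p B') {m : ℤ} {x y : V3} :
    ZpRelV p (sSet p m B') x y ↔ ZpRelV p B' x y := by
  constructor
  · rintro ⟨x', y', ⟨a, ha, rfl⟩, ⟨b, hb, rfl⟩, h1, h2, h3, h4, h5⟩
    refine rel_of_reps (a := (p : ℚ) ^ (-m) * a) (b := (p : ℚ) ^ (-m) * b)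
      (mul_ne_zero (pz_ne _) ha) (mul_ne_zero (pz_ne _) hb) ?_ ?_ ?_ ?_ ?_
    · rw [← smul_smul]; exact mem_sSet.mp h1
    · rw [← smul_smul]; exact fun hc => h2 (mem_pSMul_sSet.mpr hc)
    · rw [← smul_smul]; exact mem_sSet.mp h3
    · rw [← smul_smul]; exact fun hc => h4 (mem_pSMul_sSet.mpr hc)
    · have heq : ((p : ℚ) ^ (-m) * a) • x - ((p : ℚ) ^ (-m) * b) • y
          = (p : ℚ) ^ (-m) • (a • x - b • y) := by module
      rw [heq]
      exact mem_pSMul_sSet.mp h5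
  · rintro ⟨x', y', ⟨a, ha, rfl⟩, ⟨b, hb, rfl⟩, h1, h2, h3, h4, h5⟩
    have hmm : ∀ c : ℚ, ∀ z : V3, (p : ℚ) ^ (-m) • ((p : ℚ) ^ m * c) • z = c • z := by
      intro c z
      rw [smul_smul, ← mul_assoc, ← zpow_add₀ (pQ_ne (p := p)), neg_add_cancel,
        zpow_zero, one_mul]
    refine rel_of_reps (a := (p : ℚ) ^ m * a) (b := (p : ℚ) ^ m * b)
      (mul_ne_zero (pz_ne _) ha) (mul_ne_zero (pz_ne _) hb) ?_ ?_ ?_ ?_ ?_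
    · rw [mem_sSet, hmm]; exact h1
    · rw [mem_pSMul_sSet, hmm]; exact h2
    · rw [mem_sSet, hmm]; exact h3
    · rw [mem_pSMul_sSet, hmm]; exact h4
    · rw [mem_pSMul_sSet]
      have heq : (p : ℚ) ^ (-m) • (((p : ℚ) ^ m * a) • x - ((p : ℚ) ^ m * b) • y)
          = a • x - b • y := by
        rw [smul_sub, smul_smul, smul_smul, ← mul_assoc, ← mul_assoc,
          ← zpow_add₀ (pQ_ne (p := p)), neg_add_cancel, zpow_zero, one_mul, one_mul]
      rw [heq]
      exact h5

lemma reach (hB : LatP p B) (t : V3) :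
    ∃ m : ℤ, ∀ m' : ℤ, m ≤ m' → (p : ℚ) ^ m' • t ∈ B := by
  rcases eq_or_ne t 0 with rfl | ht
  · exact ⟨0, fun m' _ => by simpa using hB.zero⟩
  · have hxspan : t ∈ Submodule.span ℚ B := by rw [hB.spanT]; trivial
    obtain ⟨n, fc, g, hfg⟩ := Submodule.mem_span_set'.mp hxspan
    have hfne : ∃ i, fc i ≠ 0 := by
      by_contra hcon
      push_neg at hcon
      apply ht
      rw [← hfg]
      simp [hcon]
    obtain ⟨μ, hμ0, hμR, -⟩ := scale_finite (p := p) fc hfne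
    have hμx : μ • t ∈ B := by
      rw [← hfg, Finset.smul_sum]
      refine latP_sum hB _ _ (fun i _ => ?_)
      rw [smul_smul]
      exact hB.smul (hμR i) (g i).2
    refine ⟨(padicValRat p μ).toNat + 1, fun m' hm' => ?_⟩
    have heq : (p : ℚ) ^ m' • t = ((p : ℚ) ^ m' * μ⁻¹) • (μ • t) := by
      rw [smul_smul, mul_assoc, inv_mul_cancel₀ hμ0, mul_one]
    rw [heq]
    refine hB.smul (R_zpow_mul _ ?_) hμx
    rw [val_inv]
    have := Int.self_le_toNat (padicValRat p μ)
    omega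

lemma exists_m (hB : LatP p B) (s' : Finset V3) :
    ∃ m : ℤ, ∀ b' ∈ zpSpanV p s', (p : ℚ) ^ m • b' ∈ B := by
  classical
  have key : ∃ m : ℤ, ∀ t ∈ s', ∀ m' : ℤ, m ≤ m' → (p : ℚ) ^ m' • t ∈ B := by
    induction s' using Finset.cons_induction with
    | empty => exact ⟨0, by simp⟩
    | cons a s ha ih =>
      obtain ⟨m1, hm1⟩ := ih
      obtain ⟨m2, hm2⟩ := reach hB a
      refine ⟨max m1 m2, fun t ht m' hm' => ?_⟩
      rcases Finset.mem_cons.mp ht with rfl | ht'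
      · exact hm2 m' (le_trans (le_max_right _ _) hm')
      · exact hm1 t ht' m' (le_trans (le_max_left _ _) hm')
  obtain ⟨m, hm⟩ := key
  refine ⟨m, ?_⟩
  rintro b' ⟨fc, hfc, rfl⟩
  rw [Finset.smul_sum]
  refine latP_sum hB _ _ (fun t ht => ?_)
  rw [smul_smul, mul_comm, ← smul_smul]
  exact hB.smul (hfc t) (hm t ht m le_rfl)

lemma exists_nonzero (hB' : LatP p B') : ∃ z ∈ B', z ≠ 0 := by
  by_contra h
  push_neg at h
  have hle : Submodule.span ℚ B' ≤ ⊥ :=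
    Submodule.span_le.mpr (fun z hz => by simp [h z hz])
  rw [hB'.spanT] at hle
  have h1 : ((fun _ => (1 : ℚ)) : V3) ∈ (⊥ : Submodule ℚ V3) := hle trivial
  rw [Submodule.mem_bot] at h1
  exact one_ne_zero (congrFun h1 0)

end Scale

section MainInc
variable {B C : Set V3} {q qc : V3}

lemma mainInc (hB : LatP p B) (hq : q ∈ B \ pSMul p B)
    (hC : LatP p C) (hCsub : C ⊆ B) (hqc : qc ∈ C \ pSMul p C)
    (hv : ∃ v, v ∈ C ∧ v ∉ pSMul p B)
    (Feq : ∀ x : V3, x ≠ 0 → (ZpRelV p B x q ↔ ZpRelV p C x qc)) :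
    B ⊆ C := by
  have hpCB : pSMul p C ⊆ pSMul p B := by
    rintro z ⟨b, hb, rfl⟩
    exact ⟨b, hCsub hb, rfl⟩
  have hqc0 : qc ≠ 0 := ne_zero_of_not_pB hC hqc.2
  have hgood : ∃ y, y ∈ C ∧ y ∉ pSMul p C ∧ y ∉ pSMul p B ∧ ZpRelV p C y qc := by
    by_contra hbad
    push_neg at hbad
    have hqcpB : qc ∈ pSMul p B := by
      by_contra h
      exact hbad qc hqc.1 hqc.2 h (rel_refl_mem hC hqc.1 hqc.2)
    obtain ⟨M, hM⟩ := hB.bdd qc hqc0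
    obtain ⟨m₁, hm₁, hleast⟩ := Int.exists_least_of_bdd
      (P := fun m => (p : ℚ) ^ m • qc ∈ B) ⟨M, hM⟩ ⟨0, by simpa using hCsub hqc.1⟩
    have hzB : (p : ℚ) ^ m₁ • qc ∈ B := hm₁
    have hzpB : (p : ℚ) ^ m₁ • qc ∉ pSMul p B := by
      rintro ⟨b, hb, hbe⟩
      have hb' : (p : ℚ) ^ (m₁ - 1) • qc ∈ B := by
        have heq : (p : ℚ) ^ (m₁ - 1) • qc = b := by
          have h2 : (p : ℚ) ^ (m₁ - 1) • qc = (p : ℚ)⁻¹ • ((p : ℚ) ^ m₁ • qc) := by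
            rw [smul_smul, ← zpow_neg_one, ← zpow_add₀ (pQ_ne (p := p))]
            ring_nf
          rw [h2, hbe, smul_smul, inv_mul_cancel₀ (pQ_ne (p := p)), one_smul]
        rw [heq]; exact hb
      have := hleast _ hb'
      omega
    have hm₁neg : m₁ ≤ -1 := by
      obtain ⟨b, hb, hbe⟩ := hqcpB
      have hb' : (p : ℚ) ^ (-1 : ℤ) • qc ∈ B := by
        have heq : (p : ℚ) ^ (-1 : ℤ) • qc = b := by
          rw [hbe, smul_smul, zpow_neg_one, inv_mul_cancel₀ (pQ_ne (p := p)), one_smul]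
        rw [heq]; exact hb
      have := hleast _ hb'
      omega
    have hz0 : (p : ℚ) ^ m₁ • qc ≠ 0 := smul_ne_zero (pz_ne _) hqc0
    have hzRel : ZpRelV p B ((p : ℚ) ^ m₁ • qc) q := by
      refine (Feq _ hz0).mpr ?_
      exact rel_smul_left (pz_ne _) (rel_refl_mem hC hqc.1 hqc.2)
    obtain ⟨v, hvC, hvpB⟩ := hv
    have hvB : v ∈ B := hCsub hvC
    have hvpC : v ∉ pSMul p C := fun h => hvpB (hpCB h)
    have hv0 : v ≠ 0 := ne_zero_of_not_pB hB hvpB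
    have hvnRel : ¬ ZpRelV p C v qc := fun h => hbad v hvC hvpC hvpB h
    have hvnRelB : ¬ ZpRelV p B v q := fun h => hvnRel ((Feq v hv0).mp h)
    have hxB : (p : ℚ) ^ m₁ • qc + v ∈ B := hB.add hzB hvB
    have hnzB : (-1 : ℚ) • ((p : ℚ) ^ m₁ • qc) ∈ B := hB.smul (R_intCast (-1)) hzB
    have hnzpB : (-1 : ℚ) • ((p : ℚ) ^ m₁ • qc) ∉ pSMul p B := by
      intro h
      apply hzpB
      have := pB_smul hB (R_intCast (-1)) h
      simpa using this
    have hxpB : (p : ℚ) ^ m₁ • qc + v ∉ pSMul p B := by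
      intro h
      apply hvnRelB
      have h1 : v - (-1 : ℚ) • ((p : ℚ) ^ m₁ • qc) ∈ pSMul p B := by
        have heq : v - (-1 : ℚ) • ((p : ℚ) ^ m₁ • qc) = (p : ℚ) ^ m₁ • qc + v := by
          module
        rw [heq]; exact h
      have h2 := sub_pB_rel hB hvB hvpB hnzB hnzpB h1
      rw [rel_smul_right hB (by norm_num : (-1 : ℚ) ≠ 0)] at h2
      exact rel_trans hB h2 hzRel
    have hx0 : (p : ℚ) ^ m₁ • qc + v ≠ 0 := ne_zero_of_not_pB hB hxpB
    have hxnRel : ¬ ZpRelV p B ((p : ℚ) ^ m₁ • qc + v) q := by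
      intro h
      obtain ⟨lam, hUlam, hlam⟩ := rel_norm_mp hB hxB hxpB hzB hzpB
        (rel_trans hB h (rel_symm hB hzRel))
      rcases R_cases (R_sub (R_of_Un hUlam) R_one) with hD | hU
      · apply hvpB
        have heq : v = (((p : ℚ) ^ m₁ • qc + v) - lam • ((p : ℚ) ^ m₁ • qc))
            + (lam - 1) • ((p : ℚ) ^ m₁ • qc) := by module
        rw [heq]
        exact pB_add hB hlam (smul_mem_pB hB hD hzB)
      · apply hvnRelB
        have h2 : v - (lam - 1) • ((p : ℚ) ^ m₁ • qc) ∈ pSMul p B := by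
          have heq : v - (lam - 1) • ((p : ℚ) ^ m₁ • qc)
              = ((p : ℚ) ^ m₁ • qc + v) - lam • ((p : ℚ) ^ m₁ • qc) := by module
          rw [heq]; exact hlam
        have hlzB : (lam - 1) • ((p : ℚ) ^ m₁ • qc) ∈ B :=
          (un_smul_mem_iff hB hU).mpr hzB
        have hlzpB : (lam - 1) • ((p : ℚ) ^ m₁ • qc) ∉ pSMul p B :=
          fun hh => hzpB ((un_smul_pB_iff hB hU).mp hh)
        have h3 := sub_pB_rel hB hvB hvpB hlzB hlzpB h2
        rw [rel_smul_right hB hU.1] at h3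
        exact rel_trans hB h3 hzRel
    apply hxnRel
    refine (Feq _ hx0).mpr ?_
    have hkey : (p : ℚ) ^ (-m₁) • ((p : ℚ) ^ m₁ • qc + v)
        = qc + (p : ℚ) ^ (-m₁) • v := by
      rw [smul_add, smul_smul, ← zpow_add₀ (pQ_ne (p := p)), neg_add_cancel,
        zpow_zero, one_smul]
    have hpv : (p : ℚ) ^ (-m₁) • v ∈ pSMul p C := by
      refine ⟨(p : ℚ) ^ (-m₁ - 1) • v, hC.smul (R_p_zpow (by omega)) hvC, ?_⟩
      rw [smul_smul, ← zpow_one_add₀ (pQ_ne (p := p))]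
      ring_nf
    have hsum : qc + (p : ℚ) ^ (-m₁) • v ∈ C := hC.add hqc.1 (pB_subset hC hpv)
    have hsumpB : qc + (p : ℚ) ^ (-m₁) • v ∉ pSMul p C := by
      intro h
      apply hqc.2
      have heq : qc = (qc + (p : ℚ) ^ (-m₁) • v) - (p : ℚ) ^ (-m₁) • v := by abel
      rw [heq]
      exact pB_sub hC h hpv
    refine rel_of_reps (a := (p : ℚ) ^ (-m₁)) (b := 1) (pz_ne _) one_ne_zero ?_ ?_ ?_ ?_ ?_
    · rw [hkey]; exact hsum
    · rw [hkey]; exact hsumpB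
    · simpa using hqc.1
    · simpa using hqc.2
    · rw [hkey]
      have heq : qc + (p : ℚ) ^ (-m₁) • v - (1 : ℚ) • qc = (p : ℚ) ^ (-m₁) • v := by
        module
      rw [heq]
      exact hpv
  obtain ⟨qt, hqtC, hqtpC, hqtpB, hqtRel⟩ := hgood
  have hqt0 : qt ≠ 0 := ne_zero_of_not_pB hB hqtpB
  have hqtB : qt ∈ B := hCsub hqtC
  have hqtRelB : ZpRelV p B qt q := (Feq qt hqt0).mpr hqtRel
  intro u huB
  have hpu : (p : ℚ) • u ∈ pSMul p B := ⟨u, huB, rfl⟩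
  have hxB : qt + (p : ℚ) • u ∈ B := hB.add hqtB (pB_subset hB hpu)
  have hxpB : qt + (p : ℚ) • u ∉ pSMul p B := by
    intro h
    apply hqtpB
    have heq : qt = (qt + (p : ℚ) • u) - (p : ℚ) • u := by abel
    rw [heq]
    exact pB_sub hB h hpu
  have hx0 : qt + (p : ℚ) • u ≠ 0 := ne_zero_of_not_pB hB hxpB
  have hxRelqt : ZpRelV p B (qt + (p : ℚ) • u) qt :=
    sub_pB_rel hB hxB hxpB hqtB hqtpB (by simpa using hpu)
  have hxRelC : ZpRelV p C (qt + (p : ℚ) • u) qc :=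
    (Feq _ hx0).mp (rel_trans hB hxRelqt hqtRelB)
  have hxRelqtC : ZpRelV p C (qt + (p : ℚ) • u) qt :=
    rel_trans hC hxRelC (rel_symm hC hqtRel)
  obtain ⟨x', y', ⟨β, hβ0, rfl⟩, ⟨γ, hγ0, rfl⟩, hm1, hm2, hm3, hm4, hm5⟩ := hxRelqtC
  have hβR : R p β := prim_scalar hB hxB hxpB (hCsub hm1)
  have hγU : Un p γ := prim_scalar_unit hC hqtC hqtpC hm3 hm4
  have hkey : (β - γ) • qt = (β • (qt + (p : ℚ) • u) - γ • qt) - (p : ℚ) • (β • u) := by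
    module
  have h1 : (β - γ) • qt ∈ pSMul p B := by
    rw [hkey]
    exact pB_sub hB (hpCB hm5) ⟨β • u, hB.smul hβR huB, rfl⟩
  have hDβγ : DivP p (β - γ) := prim_scalar_pB hB hqtB hqtpB h1
  have hUβ : Un p β := by
    have heq : β = γ + (β - γ) := by ring
    rw [heq]
    exact Un_add_DivP hγU hDβγ
  obtain ⟨d₀, hd₀, hde⟩ := hm5
  obtain ⟨u₀, hu₀R, hu₀e⟩ := hDβγ
  have hfinal : β • u = d₀ - u₀ • qt := by
    have h2 : (p : ℚ) • (β • u) = (p : ℚ) • (d₀ - u₀ • qt) := by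
      have e1 : (p : ℚ) • (β • u) = (β • (qt + (p : ℚ) • u) - γ • qt) - (β - γ) • qt := by
        module
      rw [e1, hde, hu₀e]
      module
    exact smul_right_injective V3 (pQ_ne (p := p)) h2
  have hfin2 : β • u ∈ C := by
    rw [hfinal]
    exact sub_mem hC hd₀ (hC.smul hu₀R hqtC)
  have hfin3 := hC.smul (R_inv_of_Un hUβ) hfin2
  rwa [smul_smul, inv_mul_cancel₀ hUβ.1, one_smul] at hfin3

end MainInc

end St11

/-- Corollary 3.6: under the hypotheses of Statement 10,
suppose `f` is induced via the lattices `B` and `B'` from flag maps `f̄`, `f̄'`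
with three pairwise distinct values, with flags `q̄ ∈ l̄ = line(q̄,w̄)` and
`q̄' ∈ l̄' = line(q̄',w̄')`.  If `f̄(q̄) = f̄'(q̄')`, then `B' = a·B` for some
`a ∈ ℚ^×`, and `f̄ = f̄'` under the induced identification of `ℙ(B/pB)` with
`ℙ(B'/pB')`: the flags (hence the three level sets of the two flag maps)
correspond to each other. -/
theorem stmt11 (p : ℕ) (hp : p.Prime) (A : Type w)
    (f : Projectivization ℚ (Fin 3 → ℚ) → A)
    (h3 : ∃ a₁ a₂ a₃ : A, a₁ ≠ a₂ ∧ a₁ ≠ a₃ ∧ a₂ ≠ a₃ ∧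
      Set.range f = {a₁, a₂, a₃})
    (h2 : ∀ W : Submodule ℚ (Fin 3 → ℚ), Module.finrank ℚ W = 2 →
      ∀ x ∈ psub W, ∀ y ∈ psub W, ∀ z ∈ psub W, f x = f y ∨ f x = f z ∨ f y = f z)
    (hlines : ∀ W : Submodule ℚ (Fin 3 → ℚ), Module.finrank ℚ W = 2 →
      ∃ B : Set (Fin 3 → ℚ), IsZpLatIn p W B ∧ InducedOn f W p B ∧
        ∃ q : Fin 3 → ℚ, q ∈ B \ pSMul p B ∧
          ∀ x y : Fin 3 → ℚ, ∀ (hx : x ≠ 0) (hy : y ≠ 0), x ∈ W → y ∈ W →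
            ¬ ZpRelV p B x q → ¬ ZpRelV p B y q →
            f (Projectivization.mk ℚ x hx) = f (Projectivization.mk ℚ y hy))
    (B B' : Set (Fin 3 → ℚ)) (hB : IsZpLatIn p ⊤ B) (hB' : IsZpLatIn p ⊤ B')
    -- the flag `q̄ ∈ l̄ = line(q̄,w̄)` of `ℙ(B/pB)` and the values of `f̄`:
    (q w : Fin 3 → ℚ) (hq : q ∈ B \ pSMul p B) (hw : w ∈ B \ pSMul p B)
    (hqw : ¬ ZpRelV p B q w)
    (a₁ a₂ a₃ : A) (h12 : a₁ ≠ a₂) (h13 : a₁ ≠ a₃) (h23 : a₂ ≠ a₃)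
    (hoff : ∀ x : Fin 3 → ℚ, ∀ hx : x ≠ 0,
      (∃ a : ℚ, a ≠ 0 ∧ a • x ∈ (B \ pSMul p B) ∧ a • x ∉ resLineV p B q w) →
      f (Projectivization.mk ℚ x hx) = a₁)
    (hlin : ∀ x : Fin 3 → ℚ, ∀ hx : x ≠ 0,
      (∃ a : ℚ, a ≠ 0 ∧ a • x ∈ resLineV p B q w \ pSMul p B) → ¬ ZpRelV p B x q →
      f (Projectivization.mk ℚ x hx) = a₂)
    (hpt : ∀ x : Fin 3 → ℚ, ∀ hx : x ≠ 0, ZpRelV p B x q →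
      f (Projectivization.mk ℚ x hx) = a₃)
    -- the flag `q̄' ∈ l̄' = line(q̄',w̄')` of `ℙ(B'/pB')` and the values of `f̄'`:
    (q' w' : Fin 3 → ℚ) (hq' : q' ∈ B' \ pSMul p B') (hw' : w' ∈ B' \ pSMul p B')
    (hqw' : ¬ ZpRelV p B' q' w')
    (a₁' a₂' a₃' : A) (h12' : a₁' ≠ a₂') (h13' : a₁' ≠ a₃') (h23' : a₂' ≠ a₃')
    (hoff' : ∀ x : Fin 3 → ℚ, ∀ hx : x ≠ 0,
      (∃ a : ℚ, a ≠ 0 ∧ a • x ∈ (B' \ pSMul p B') ∧ a • x ∉ resLineV p B' q' w') →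
      f (Projectivization.mk ℚ x hx) = a₁')
    (hlin' : ∀ x : Fin 3 → ℚ, ∀ hx : x ≠ 0,
      (∃ a : ℚ, a ≠ 0 ∧ a • x ∈ resLineV p B' q' w' \ pSMul p B') → ¬ ZpRelV p B' x q' →
      f (Projectivization.mk ℚ x hx) = a₂')
    (hpt' : ∀ x : Fin 3 → ℚ, ∀ hx : x ≠ 0, ZpRelV p B' x q' →
      f (Projectivization.mk ℚ x hx) = a₃')
    -- `f̄(q̄) = f̄'(q̄')`:
    (hval : a₃ = a₃') :
    ∃ a : ℚ, a ≠ 0 ∧ B' = (fun t => a • t) '' B ∧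
      (∀ x : Fin 3 → ℚ, x ≠ 0 → (ZpRelV p B x q ↔ ZpRelV p B' x q')) ∧
      (∀ x : Fin 3 → ℚ, x ≠ 0 →
        ((∃ c : ℚ, c ≠ 0 ∧ c • x ∈ resLineV p B q w \ pSMul p B) ↔
         (∃ c : ℚ, c ≠ 0 ∧ c • x ∈ resLineV p B' q' w' \ pSMul p B'))) := by
    classical
  haveI hpf : Fact p.Prime := ⟨hp⟩
  have hBL : St11.LatP p B := St11.latP_of_isZpLatIn hB
  have hB'L : St11.LatP p B' := St11.latP_of_isZpLatIn hB'
  have hw'0 : w' ≠ 0 := St11.ne_zero_of_not_pB hB'L hw'.2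
  have hw0 : w ≠ 0 := St11.ne_zero_of_not_pB hBL hw.2
  have hfw' : f (Projectivization.mk ℚ w' hw'0) = a₂' :=
    (St11.char2 hB'L hq' hw' hqw' hoff' hlin' hpt' h12' h13' h23' hw'0).mpr
      ⟨⟨1, one_ne_zero, by simpa using And.intro (St11.w_mem_resLine hB'L) hw'.2⟩,
        fun h => hqw' (St11.rel_symm hB'L h)⟩
  have ha22 : a₂ = a₂' := by
    rcases St11.coverage hBL hq hw hqw hoff hlin hpt hw'0 with ⟨h, -, -⟩ | ⟨h, -, -⟩ | ⟨h, -⟩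
    · exfalso
      have hA1 : a₂' = a₁ := hfw'.symm.trans h
      exact St11.no_swap hBL hq hw hqw hoff hlin hpt h12 h13 h23 hB'L hq' hw' hqw'
        hoff' hlin' hpt' h12' h13' h23' hval hA1
    · exact (hfw'.symm.trans h).symm
    · exact absurd ((hfw'.symm.trans h).trans hval) h23'
  have Feq : ∀ x : Fin 3 → ℚ, x ≠ 0 → (ZpRelV p B x q ↔ ZpRelV p B' x q') := by
    intro x hx
    rw [← St11.char3 hBL hq hw hqw hoff hlin hpt h12 h13 h23 hx,
      ← St11.char3 hB'L hq' hw' hqw' hoff' hlin' hpt' h12' h13' h23' hx, hval]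
  have Leq : ∀ x : Fin 3 → ℚ, x ≠ 0 →
      (St11.LineCl p B q w x ↔ St11.LineCl p B' q' w' x) := by
    intro x hx
    rw [St11.charL hBL hq hw hqw hoff hlin hpt h12 h13 h23 hx,
      St11.charL hB'L hq' hw' hqw' hoff' hlin' hpt' h12' h13' h23' hx, ha22, hval]
  obtain ⟨s', hs'⟩ := hB'.1
  obtain ⟨mex, hmex⟩ := St11.exists_m hBL s'
  obtain ⟨z₀, hz₀B, hz₀0⟩ := St11.exists_nonzero hB'L
  obtain ⟨M, hM⟩ := hBL.bdd z₀ hz₀0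
  obtain ⟨m₀, hm₀, hleast⟩ := Int.exists_least_of_bdd
    (P := fun m => ∀ b' ∈ B', (p : ℚ) ^ m • b' ∈ B)
    ⟨M, fun m hm => hM m (hm z₀ hz₀B)⟩
    ⟨mex, fun b' hb' => hmex b' (hs' ▸ hb')⟩
  have hCL : St11.LatP p (St11.sSet p m₀ B') := St11.latP_sSet hB'L m₀
  have hCsub : St11.sSet p m₀ B' ⊆ B := by
    rintro z ⟨t, ht, rfl⟩
    exact hm₀ t ht
  have hv : ∃ v, v ∈ St11.sSet p m₀ B' ∧ v ∉ pSMul p B := by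
    by_contra hcon
    push_neg at hcon
    have hP : ∀ b' ∈ B', (p : ℚ) ^ (m₀ - 1) • b' ∈ B := by
      intro b' hb'
      obtain ⟨b, hb, hbe⟩ := hcon _ ⟨b', hb', rfl⟩
      have hbe' : (p : ℚ) ^ m₀ • b' = (p : ℚ) • b := hbe
      have heq : (p : ℚ) ^ (m₀ - 1) • b' = b := by
        have h2 : (p : ℚ) ^ (m₀ - 1) • b' = (p : ℚ)⁻¹ • ((p : ℚ) ^ m₀ • b') := by
          rw [smul_smul, ← zpow_neg_one, ← zpow_add₀ (St11.pQ_ne (p := p))]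
          ring_nf
        rw [h2, hbe', smul_smul, inv_mul_cancel₀ (St11.pQ_ne (p := p)), one_smul]
      rw [heq]; exact hb
    have := hleast _ hP
    omega
  have hqcC : (p : ℚ) ^ m₀ • q' ∈ St11.sSet p m₀ B' ∧
      (p : ℚ) ^ m₀ • q' ∉ pSMul p (St11.sSet p m₀ B') := by
    constructor
    · exact ⟨q', hq'.1, rfl⟩
    · intro h
      rw [St11.mem_pSMul_sSet, smul_smul, ← zpow_add₀ (St11.pQ_ne (p := p)),
        neg_add_cancel, zpow_zero, one_smul] at h
      exact hq'.2 h
  have FeqC : ∀ x : Fin 3 → ℚ, x ≠ 0 →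
      (ZpRelV p B x q ↔ ZpRelV p (St11.sSet p m₀ B') x ((p : ℚ) ^ m₀ • q')) := by
    intro x hx
    rw [Feq x hx, St11.rel_sSet hB'L, St11.rel_smul_right hB'L (St11.pz_ne _)]
  have hBC : B ⊆ St11.sSet p m₀ B' :=
    St11.mainInc hBL hq hCL hCsub ⟨hqcC.1, hqcC.2⟩ hv FeqC
  have hCB : St11.sSet p m₀ B' = B := Set.Subset.antisymm hCsub hBC
  refine ⟨(p : ℚ) ^ (-m₀), St11.pz_ne _, ?_, fun x hx => Feq x hx, fun x hx => Leq x hx⟩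
  rw [← hCB]
  ext z
  constructor
  · intro hz
    refine ⟨(p : ℚ) ^ m₀ • z, ⟨z, hz, rfl⟩, ?_⟩
    show (p : ℚ) ^ (-m₀) • (p : ℚ) ^ m₀ • z = z
    rw [smul_smul, ← zpow_add₀ (St11.pQ_ne (p := p)), neg_add_cancel, zpow_zero, one_smul]
  · rintro ⟨y, ⟨t, ht, rfl⟩, rfl⟩
    have heq : (p : ℚ) ^ (-m₀) • (p : ℚ) ^ m₀ • t = t := by
      rw [smul_smul, ← zpow_add₀ (St11.pQ_ne (p := p)), neg_add_cancel, zpow_zero, one_smul]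
    show (p : ℚ) ^ (-m₀) • (p : ℚ) ^ m₀ • t ∈ B'
    rw [heq]
    exact ht
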